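/- arXiv:2009.11642 — 8 statements merged into one kernel-verified Lean document; each statement's English description precedes it below -/
import Mathlib

section
/- Let H be a graph, possibly with loops, and let (G,L) be a consistent instance of the list homomorphism problem to the associated bipartite graph H*. Define L' : V(G) → 2^{V(H)} by L'(x) := {u ∈ V(H) : u' ∈ L(x) or u'' ∈ L(x)}. Then there exists a list homomorphism (G,L) → H* if and only if there exists a list homomorphism (G,L') → H. -/
open SimpleGraph

/-- A list homomorphism from `G` to the (possibly reflexive) graph given by the
symmetric relation `H`, respecting the lists `L`. -/
def ListHomRel {U W : Type} (G : SimpleGraph U) (H : W → W → Prop)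
    (L : U → Set W) (φ : U → W) : Prop :=
  (∀ v, φ v ∈ L v) ∧ ∀ ⦃u v : U⦄, G.Adj u v → H (φ u) (φ v)

/-- Two vertices are incomparable: neither neighbourhood contains the other. -/
def IncompPair {W : Type} (H : SimpleGraph W) (u v : W) : Prop :=
  ¬ H.neighborSet u ⊆ H.neighborSet v ∧ ¬ H.neighborSet v ⊆ H.neighborSet u

/-- A set is incomparable if its vertices are pairwise incomparable. -/
def IncompSet {W : Type} (H : SimpleGraph W) (S : Set W) : Prop :=
  ∀ u ∈ S, ∀ v ∈ S, u ≠ v → IncompPair H u v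

/-- The associated bipartite graph `H*` of a graph `H` (possibly with loops, given as a
symmetric relation): vertices `v' = Sum.inl v` and `v'' = Sum.inr v`, with `u'` adjacent
to `v''` iff `uv ∈ E(H)`. -/
def assocBip {W : Type} (H : W → W → Prop) : SimpleGraph (W ⊕ W) where
  Adj x y :=
    (∃ u v, x = Sum.inl u ∧ y = Sum.inr v ∧ H u v) ∨
    (∃ u v, x = Sum.inr u ∧ y = Sum.inl v ∧ H v u)
  symm := by
    constructor
    rintro x y (⟨u, v, rfl, rfl, h⟩ | ⟨u, v, rfl, rfl, h⟩)
    · exact Or.inr ⟨v, u, rfl, rfl, h⟩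
    · exact Or.inl ⟨v, u, rfl, rfl, h⟩
  loopless := by
    constructor
    rintro x (⟨u, v, h1, h2, _⟩ | ⟨u, v, h1, h2, _⟩) <;> subst h1 <;> simp at h2

/-- Proposition: let `H` be a graph (possibly with loops) and `(G,L)` a consistent instance
of the list homomorphism problem to the associated bipartite graph `H*`: `G` is connected
and bipartite with bipartition class `XG`, lists of vertices of `XG` consist of primed
vertices, lists of the other class of double-primed vertices, and all lists are
incomparable sets.  With `L' x := {u : u' ∈ L x or u'' ∈ L x}`, we have
`(G,L) → H*` iff `(G,L') → H`. -/
theorem consistent_assocBip_iff {U W : Type} (H : W → W → Prop)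
    (hsym : ∀ u v, H u v → H v u)
    (G : SimpleGraph U) (L : U → Set (W ⊕ W)) (XG : Set U)
    (hconn : G.Connected)
    (hbipG : ∀ ⦃u v : U⦄, G.Adj u v → (u ∈ XG ↔ v ∉ XG))
    (hLX : ∀ x ∈ XG, L x ⊆ Set.range Sum.inl)
    (hLY : ∀ x ∉ XG, L x ⊆ Set.range Sum.inr)
    (hinc : ∀ x : U, IncompSet (assocBip H) (L x)) :
    (∃ φ : U → W ⊕ W, ListHomRel G (assocBip H).Adj L φ) ↔
    (∃ ψ : U → W, ListHomRel G H
      (fun x => {u : W | Sum.inl u ∈ L x ∨ Sum.inr u ∈ L x}) ψ) := by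
  classical
  constructor
  · rintro ⟨φ, hφL, hφA⟩
    refine ⟨fun x => Sum.elim id id (φ x), fun x => ?_, fun u v huv => ?_⟩
    · cases hx : φ x with
      | inl a => exact Or.inl (by simpa [hx] using hφL x)
      | inr a => exact Or.inr (by simpa [hx] using hφL x)
    · rcases hφA huv with ⟨a, b, h1, h2, h⟩ | ⟨a, b, h1, h2, h⟩ <;>
        simp [h1, h2]
      · exact h
      · exact hsym _ _ h
  · rintro ⟨ψ, hψL, hψA⟩
    refine ⟨fun x => if x ∈ XG then Sum.inl (ψ x) else Sum.inr (ψ x),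
      fun x => ?_, fun u v huv => ?_⟩
    · by_cases hx : x ∈ XG <;> simp only [hx, if_true, if_false, if_pos, if_neg, not_false_iff]
      · rcases hψL x with h | h
        · exact h
        · exact absurd (hLX x hx h) (by simp)
      · rcases hψL x with h | h
        · exact absurd (hLY x hx h) (by simp)
        · exact h
    · by_cases hu : u ∈ XG
      · have hv : v ∉ XG := (hbipG huv).mp hu
        simp only [hu, hv, if_true, if_false]
        exact Or.inl ⟨ψ u, ψ v, rfl, rfl, hψA huv⟩
      · have hv : v ∈ XG := by
          by_contra hv; exact hu ((hbipG huv).mpr hv)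
        simp only [hu, hv, if_true, if_false]
        exact Or.inr ⟨ψ u, ψ v, rfl, rfl, hsym _ _ (hψA huv)⟩
end

section
/- Let H be a bipartite graph and let 𝔻 = {D_1,…,D_k} be a set of walks D_i : s_i → t_i in H, all of the same length ℓ ≥ 1, with all starting vertices s_i in one bipartition class. Let (A,B) be a partition of 𝔻 into two non-empty sets, and for C ∈ {A,B} set S(C) = {s_i : D_i ∈ C} and T(C) = {t_i : D_i ∈ C}. Suppose S(A) ∩ S(B) = ∅, T(A) ∩ T(B) = ∅, and every walk in A avoids every walk in B. Then the path ℙ(𝔻), with input vertex x, output vertex y and lists L, satisfies: (a) L(x) = S(A) ∪ S(B) and L(y) = T(A) ∪ T(B); (b) for every i ∈ {1,…,k} there is a list homomorphism f_i : (ℙ(𝔻),L) → H with f_i(x) = s_i and f_i(y) = t_i; (c) for every list homomorphism f : (ℙ(𝔻),L) → H, if f(x) ∈ S(A) then f(y) ∉ T(B). Furthermore, if additionally every walk in B avoids every walk in A, then (d) for every list homomorphism f : (ℙ(𝔻),L) → H, if f(x) ∈ S(B) then f(y) ∉ T(A). -/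
open SimpleGraph

/-- `X` is a bipartition class of `H`. -/
def BipClass {W : Type} (H : SimpleGraph W) (X : Set W) : Prop :=
  ∀ ⦃u v : W⦄, H.Adj u v → (u ∈ X ↔ v ∉ X)

/-- Walk `P` avoids walk `Q` (walks of equal length starting in one bipartition class). -/
def Avoids {W : Type} (H : SimpleGraph W) {a b c d : W}
    (P : H.Walk a b) (Q : H.Walk c d) : Prop :=
  a ≠ c ∧ ∀ i, i < P.length → ¬ H.Adj (P.getVert i) (Q.getVert (i + 1))

/-- The gadget `ℙ(𝔻)` built from a family `D i : s i → t i` of walks of common length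
`ℓ ≥ 1` in a bipartite graph `H` (all starting vertices in one bipartition class `X`),
with lists `L j` = set of `j`-th vertices of the walks, input vertex `0` and output vertex
`Fin.last ℓ` of the path `pathGraph (ℓ+1)`.  If `A, Aᶜ` is a partition of the walks into
two non-empty parts with disjoint start-vertex sets and disjoint end-vertex sets such that
every walk of `A` avoids every walk of `Aᶜ`, then:
(a) `L 0 = S(A) ∪ S(B)` and `L last = T(A) ∪ T(B)`;
(b) for every `i` there is a list homomorphism sending the input to `s i` and the output
to `t i`;
(c) every list homomorphism sending the input into `S(A)` sends the output outside `T(B)`;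
(d) if moreover every walk of `Aᶜ` avoids every walk of `A`, then every list homomorphism
sending the input into `S(B)` sends the output outside `T(A)`. -/
theorem gadget_of_walks {W : Type} [Fintype W] (H : SimpleGraph W) (X : Set W)
    (hbip : BipClass H X) (k ℓ : ℕ) (hℓ : 1 ≤ ℓ)
    (s t : Fin k → W) (D : (i : Fin k) → H.Walk (s i) (t i))
    (hlen : ∀ i, (D i).length = ℓ) (hsX : ∀ i, s i ∈ X)
    (A : Set (Fin k)) (hA : A.Nonempty) (hB : Aᶜ.Nonempty)
    (hS : ∀ i ∈ A, ∀ j ∈ Aᶜ, s i ≠ s j) (hT : ∀ i ∈ A, ∀ j ∈ Aᶜ, t i ≠ t j)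
    (havoid : ∀ i ∈ A, ∀ j ∈ Aᶜ, Avoids H (D i) (D j))
    (L : Fin (ℓ + 1) → Set W)
    (hL : ∀ j : Fin (ℓ + 1), L j = {w | ∃ i : Fin k, (D i).getVert (j : ℕ) = w}) :
    (L 0 = {w | ∃ i : Fin k, s i = w} ∧ L (Fin.last ℓ) = {w | ∃ i : Fin k, t i = w}) ∧
    (∀ i : Fin k, ∃ f : Fin (ℓ + 1) → W,
      ListHomRel (SimpleGraph.pathGraph (ℓ + 1)) H.Adj L f ∧
      f 0 = s i ∧ f (Fin.last ℓ) = t i) ∧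
    (∀ f : Fin (ℓ + 1) → W, ListHomRel (SimpleGraph.pathGraph (ℓ + 1)) H.Adj L f →
      (∃ i ∈ A, f 0 = s i) → ¬ ∃ j ∈ Aᶜ, f (Fin.last ℓ) = t j) ∧
    ((∀ i ∈ Aᶜ, ∀ j ∈ A, Avoids H (D i) (D j)) →
      ∀ f : Fin (ℓ + 1) → W, ListHomRel (SimpleGraph.pathGraph (ℓ + 1)) H.Adj L f →
        (∃ i ∈ Aᶜ, f 0 = s i) → ¬ ∃ j ∈ A, f (Fin.last ℓ) = t j) := by
  have hget0 : ∀ i, (D i).getVert 0 = s i := fun i => (D i).getVert_zero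
  have hgetl : ∀ i, (D i).getVert ℓ = t i := fun i => by
    conv_lhs => rw [← hlen i]
    exact (D i).getVert_length
  have key : ∀ C : Set (Fin k), (∀ i ∉ C, ∀ j ∈ C, Avoids H (D i) (D j)) →
      ∀ f : Fin (ℓ + 1) → W, ListHomRel (SimpleGraph.pathGraph (ℓ + 1)) H.Adj L f →
      (∀ j ∈ C, f 0 ≠ s j) →
      ∀ m : ℕ, (hm : m ≤ ℓ) → ∀ j ∈ C, f ⟨m, by omega⟩ ≠ (D j).getVert m := by
    intro C hav f hf h0 m
    induction m with
    | zero =>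
      intro _ j hj
      have : (⟨0, by omega⟩ : Fin (ℓ + 1)) = 0 := rfl
      rw [this, hget0 j]
      exact h0 j hj
    | succ n ih =>
      intro hm j hj hne
      have hn : n ≤ ℓ := by omega
      have hmem := hf.1 ⟨n, by omega⟩
      rw [hL] at hmem
      obtain ⟨i, hi⟩ := hmem
      have hiC : i ∉ C := fun hiC => ih hn i hiC hi.symm
      have hadjP : (SimpleGraph.pathGraph (ℓ + 1)).Adj ⟨n, by omega⟩ ⟨n + 1, by omega⟩ :=
        SimpleGraph.pathGraph_adj.mpr (Or.inl rfl)
      have hadj : H.Adj (f ⟨n, by omega⟩) (f ⟨n + 1, by omega⟩) := hf.2 hadjP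
      have hi' : (D i).getVert n = f ⟨n, by omega⟩ := hi
      have := (hav i hiC j hj).2 n (by rw [hlen]; omega)
      apply this
      rw [hi', ← hne]
      exact hadj
  refine ⟨⟨?_, ?_⟩, ?_, ?_, ?_⟩
  · rw [hL]
    simp only [Fin.val_zero]
    ext w
    constructor
    · rintro ⟨i, hi⟩; exact ⟨i, by rw [← hget0 i, hi]⟩
    · rintro ⟨i, hi⟩; exact ⟨i, by rw [hget0 i, hi]⟩
  · rw [hL]
    simp only [Fin.val_last]
    ext w
    constructor
    · rintro ⟨i, hi⟩; exact ⟨i, by rw [← hgetl i, hi]⟩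
    · rintro ⟨i, hi⟩; exact ⟨i, by rw [hgetl i, hi]⟩
  · intro i
    refine ⟨fun j => (D i).getVert j, ⟨fun v => by rw [hL]; exact ⟨i, rfl⟩, ?_⟩, hget0 i, ?_⟩
    · intro u v huv
      rcases SimpleGraph.pathGraph_adj.mp huv with h | h
      · have hu : (u : ℕ) < (D i).length := by rw [hlen]; omega
        have := (D i).adj_getVert_succ hu
        rwa [h] at this
      · have hv : (v : ℕ) < (D i).length := by rw [hlen]; omega
        have := (D i).adj_getVert_succ hv
        rw [h] at this
        exact this.symm
    · show (D i).getVert (Fin.last ℓ : Fin (ℓ + 1)).val = t i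
      rw [Fin.val_last]
      exact hgetl i
  · rintro f hf ⟨i0, hi0, hfi0⟩ ⟨j0, hj0, hfj0⟩
    have h0 : ∀ j ∈ Aᶜ, f 0 ≠ s j := by
      intro j hj h
      exact hS i0 hi0 j hj (hfi0 ▸ h)
    have := key Aᶜ (fun i hi j hj => havoid i (not_not.mp hi) j hj) f hf h0 ℓ le_rfl j0 hj0
    have hlast : (⟨ℓ, by omega⟩ : Fin (ℓ + 1)) = Fin.last ℓ := rfl
    rw [hlast, hfj0, hgetl j0] at this
    exact this rfl
  · rintro havoid' f hf ⟨i0, hi0, hfi0⟩ ⟨j0, hj0, hfj0⟩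
    have h0 : ∀ j ∈ A, f 0 ≠ s j := by
      intro j hj h
      exact hS j hj i0 hi0 (h ▸ hfi0.symm).symm
    have := key A (fun i hi j hj => havoid' i hi j hj) f hf h0 ℓ le_rfl j0 hj0
    have hlast : (⟨ℓ, by omega⟩ : Fin (ℓ + 1)) = Fin.last ℓ := rfl
    rw [hlast, hfj0, hgetl j0] at this
    exact this rfl
end

section
/- Let H be a connected, bipartite, undecomposable graph whose complement is not a circular-arc graph, let (α,β,γ) be a structural triple of H, and let g ∈ ℕ. Then there exists a path T of even length with H-lists L, with endvertices p (the input) and r (the output) and an internal vertex q lying in the same bipartition class of T as p and r, such that: (S1) L(p) = L(r) = {α,β} and L(q) = {α,β,γ}; (S2) for every a ∈ {α,β} there exists a list homomorphism φ : (T,L) → H with φ(p) = φ(r) = a and φ(q) ≠ γ; (S3) there exists a list homomorphism φ : (T,L) → H with φ(p) = α, φ(r) = β, and φ(q) = γ; (S4) for every list homomorphism φ : (T,L) → H, if φ(p) = α and φ(r) = β then φ(q) = γ. Moreover, dist(p,q) ≥ g/2 and dist(r,q) ≥ g/2. -/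
open SimpleGraph

/-- A set is strongly incomparable if every vertex has a private neighbor. -/
def StrongIncompSet {W : Type} (H : SimpleGraph W) (S : Set W) : Prop :=
  ∀ u ∈ S, ∃ u', H.Adj u u' ∧ ∀ w ∈ S, w ≠ u → ¬ H.Adj w u'

/-- `w` lists the consecutive vertices of an induced cycle of length `m` in `H`. -/
def IsInducedCycleOn {W : Type} (H : SimpleGraph W) {m : ℕ} (w : Fin m → W) : Prop :=
  Function.Injective w ∧
    ∀ i j : Fin m, H.Adj (w i) (w j) ↔ ((j : ℕ) = ((i : ℕ) + 1) % m ∨ (i : ℕ) = ((j : ℕ) + 1) % m)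

/-- A structural triple `(α,β,γ)` of a bipartite graph `H`: (1) there are `α',β'` such that
the edges `αα'`, `ββ'` induce a matching; (2) `α,β,γ` are pairwise incomparable; (3) there
are walks `P,P' : α→β` and `Q,Q' : β→α` of matching lengths with `P` avoiding `Q` and `Q'`
avoiding `P'`; (4) either an induced `C₆` or `C₈` through `α,β,γ` as prescribed exists, or
`{α,β,γ}` is strongly incomparable and suitable mutually avoiding walks exist for every
permutation of `(α,β,γ)`. -/
def StructTriple {W : Type} (H : SimpleGraph W) (α β γ : W) : Prop :=
  (∃ α' β' : W, H.Adj α α' ∧ H.Adj β β' ∧ α ≠ β ∧ α' ≠ β' ∧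
     ¬ H.Adj α β ∧ ¬ H.Adj α' β' ∧ ¬ H.Adj α β' ∧ ¬ H.Adj β α') ∧
  (IncompPair H α β ∧ IncompPair H α γ ∧ IncompPair H β γ) ∧
  (∃ (P : H.Walk α β) (P' : H.Walk α β) (Q : H.Walk β α) (Q' : H.Walk β α),
     P.length = Q.length ∧ P'.length = Q'.length ∧ Avoids H P Q ∧ Avoids H Q' P') ∧
  ((∃ w : Fin 6 → W, IsInducedCycleOn H w ∧ α = w 0 ∧ β = w 4 ∧ γ = w 2) ∨
   (∃ w : Fin 8 → W, IsInducedCycleOn H w ∧ α = w 0 ∧ β = w 4 ∧ γ = w 2) ∨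
   (StrongIncompSet H {α, β, γ} ∧
     ∀ a b c : W, ({a, b, c} : Set W) = {α, β, γ} →
       ∃ (Xc : H.Walk α a) (Yc : H.Walk α b) (Zc : H.Walk β c),
         Xc.length = Zc.length ∧ Yc.length = Zc.length ∧
         Avoids H Xc Zc ∧ Avoids H Yc Zc ∧ Avoids H Zc Xc ∧ Avoids H Zc Yc))

/-- An arc of the circle (modelled as `AddCircle 1`): the image of a closed interval. -/
def IsCircArc (A : Set (AddCircle (1 : ℝ))) : Prop :=
  ∃ s ℓ : ℝ, 0 ≤ ℓ ∧ A = (fun t : ℝ => ((s + t : ℝ) : AddCircle (1 : ℝ))) '' Set.Icc 0 ℓ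

/-- A circular-arc graph: vertices can be assigned arcs of a circle so that two distinct
vertices are adjacent iff their arcs intersect. -/
def IsCircularArcGraph {W : Type} (G : SimpleGraph W) : Prop :=
  ∃ a : W → Set (AddCircle (1 : ℝ)),
    (∀ v, IsCircArc (a v)) ∧ ∀ u v : W, u ≠ v → (G.Adj u v ↔ (a u ∩ a v).Nonempty)

/-- In the bipartite graph `H` with bipartition class `X`, the set `S` induces a
biclique: all cross pairs are adjacent. -/
def InducesBiclique {W : Type} (H : SimpleGraph W) (X S : Set W) : Prop :=
  ∀ u ∈ S ∩ X, ∀ v ∈ S \ X, H.Adj u v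

/-- A bipartite decomposition `(D,N,R)` of the bipartite graph `H` with class `X`:
`(D,N,R)` partitions the vertices, `N` is non-empty and separates `D` from `R`,
`D` contains two vertices of one class, `N` induces a biclique, and
`(D∩X)∪(N\X)` and `(D\X)∪(N∩X)` induce bicliques. -/
def BipDecomp {W : Type} (H : SimpleGraph W) (X : Set W) (D N R : Set W) : Prop :=
  N.Nonempty ∧ D ∪ N ∪ R = Set.univ ∧
  Disjoint D N ∧ Disjoint D R ∧ Disjoint N R ∧
  (∀ d ∈ D, ∀ r ∈ R, ∀ p : H.Walk d r, ∃ v ∈ N, v ∈ p.support) ∧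
  (2 ≤ (D ∩ X).ncard ∨ 2 ≤ (D \ X).ncard) ∧
  InducesBiclique H X N ∧
  InducesBiclique H X ((D ∩ X) ∪ (N \ X)) ∧
  InducesBiclique H X ((D \ X) ∪ (N ∩ X))

/-- `H` is undecomposable: it admits no bipartite decomposition. -/
def Undecomposable {W : Type} (H : SimpleGraph W) (X : Set W) : Prop :=
  ¬ ∃ D N R : Set W, BipDecomp H X D N R

section Helpers


variable {W : Type} {H : SimpleGraph W}

/-- Forcing lemma for a segment with tracks `x`, `y`, `z`, where `x` and `y` avoid `z`. -/
lemma seg_force (ℓ : ℕ) (x y z φ : ℕ → W)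
    (hmem : ∀ i, i ≤ ℓ → φ i = x i ∨ φ i = y i ∨ φ i = z i)
    (hadj : ∀ i, i < ℓ → H.Adj (φ i) (φ (i+1)))
    (avx : ∀ i, i < ℓ → ¬ H.Adj (x i) (z (i+1)))
    (avy : ∀ i, i < ℓ → ¬ H.Adj (y i) (z (i+1)))
    (base : φ 0 = x 0 ∨ φ 0 = y 0) :
    ∀ i, i ≤ ℓ → φ i = x i ∨ φ i = y i := by
  intro i
  induction i with
  | zero => intro _; exact base
  | succ n ih =>
    intro h
    have hn := ih (by omega)
    rcases hmem (n+1) h with h1 | h1 | h1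
    · exact Or.inl h1
    · exact Or.inr h1
    · exfalso
      have hadj' := hadj n (by omega)
      rw [h1] at hadj'
      rcases hn with h2 | h2 <;> rw [h2] at hadj'
      · exact avx n (by omega) hadj'
      · exact avy n (by omega) hadj'

lemma walk_parity {X : Set W} (hbip : BipClass H X)
    (f : ℕ → W) (ℓ : ℕ) (hadj : ∀ i, i < ℓ → H.Adj (f i) (f (i+1)))
    (h0 : f 0 ∈ X) (hl : f ℓ ∈ X) : ℓ % 2 = 0 := by
  have key : ∀ i, i ≤ ℓ → (f i ∈ X ↔ i % 2 = 0) := by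
    intro i
    induction i with
    | zero => intro _; simp [h0]
    | succ n ih =>
      intro h
      have hn := ih (by omega)
      have hb := hbip (hadj n (by omega))
      constructor
      · intro hin
        by_contra hmod
        have hmo : n % 2 = 0 := by omega
        exact (hb.mp (hn.mpr hmo)) hin
      · intro hmod
        by_contra hnin
        have : f n ∈ X := hb.mpr hnin
        have := hn.mp this
        omega
  exact (key ℓ le_rfl).mp hl

lemma pathGraph_walk_val_bound {m : ℕ} {a b : Fin m}
    (p : (SimpleGraph.pathGraph m).Walk a b) :
    (b : ℕ) ≤ (a : ℕ) + p.length ∧ (a : ℕ) ≤ (b : ℕ) + p.length := by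
  induction p with
  | nil => simp
  | @cons u c v h p ih =>
    rw [SimpleGraph.pathGraph_adj] at h
    rcases ih with ⟨ih1, ih2⟩
    simp only [SimpleGraph.Walk.length_cons]
    omega

/-- A piecewise function made of five pieces. -/
def pw5 {A : Type} (b1 b2 b3 b4 : ℕ) (f1 f2 f3 f4 f5 : ℕ → A) : ℕ → A :=
  fun i => if i ≤ b1 then f1 i else if i ≤ b2 then f2 (i - b1)
    else if i ≤ b3 then f3 (i - b2) else if i ≤ b4 then f4 (i - b3) else f5 (i - b4)

lemma pw5_closed {A : Type} (b1 b2 b3 b4 : ℕ) (f1 f2 f3 f4 f5 : ℕ → A)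
    (h12 : b1 ≤ b2) (h23 : b2 ≤ b3) (h34 : b3 ≤ b4)
    (e1 : f1 b1 = f2 0) (e2 : f2 (b2 - b1) = f3 0) (e3 : f3 (b3 - b2) = f4 0)
    (e4 : f4 (b4 - b3) = f5 0) :
    (∀ i, i ≤ b1 → pw5 b1 b2 b3 b4 f1 f2 f3 f4 f5 i = f1 i) ∧
    (∀ i, b1 ≤ i → i ≤ b2 → pw5 b1 b2 b3 b4 f1 f2 f3 f4 f5 i = f2 (i - b1)) ∧
    (∀ i, b2 ≤ i → i ≤ b3 → pw5 b1 b2 b3 b4 f1 f2 f3 f4 f5 i = f3 (i - b2)) ∧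
    (∀ i, b3 ≤ i → i ≤ b4 → pw5 b1 b2 b3 b4 f1 f2 f3 f4 f5 i = f4 (i - b3)) ∧
    (∀ i, b4 ≤ i → pw5 b1 b2 b3 b4 f1 f2 f3 f4 f5 i = f5 (i - b4)) := by
  have E1 : ∀ i, i ≤ b1 → pw5 b1 b2 b3 b4 f1 f2 f3 f4 f5 i = f1 i := by
    intro i hi; simp only [pw5, if_pos hi]
  have E2 : ∀ i, b1 ≤ i → i ≤ b2 → pw5 b1 b2 b3 b4 f1 f2 f3 f4 f5 i = f2 (i - b1) := by
    intro i hi1 hi2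
    rcases Nat.eq_or_lt_of_le hi1 with rfl | hlt
    · rw [E1 _ le_rfl, Nat.sub_self, ← e1]
    · simp only [pw5, if_neg (by omega : ¬ i ≤ b1), if_pos hi2]
  have E3 : ∀ i, b2 ≤ i → i ≤ b3 → pw5 b1 b2 b3 b4 f1 f2 f3 f4 f5 i = f3 (i - b2) := by
    intro i hi1 hi2
    rcases Nat.eq_or_lt_of_le hi1 with rfl | hlt
    · rw [E2 _ h12 le_rfl, Nat.sub_self, ← e2]
    · simp only [pw5, if_neg (by omega : ¬ i ≤ b1), if_neg (by omega : ¬ i ≤ b2), if_pos hi2]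
  have E4 : ∀ i, b3 ≤ i → i ≤ b4 → pw5 b1 b2 b3 b4 f1 f2 f3 f4 f5 i = f4 (i - b3) := by
    intro i hi1 hi2
    rcases Nat.eq_or_lt_of_le hi1 with rfl | hlt
    · rw [E3 _ h23 le_rfl, Nat.sub_self, ← e3]
    · simp only [pw5, if_neg (by omega : ¬ i ≤ b1), if_neg (by omega : ¬ i ≤ b2),
        if_neg (by omega : ¬ i ≤ b3), if_pos hi2]
  have E5 : ∀ i, b4 ≤ i → pw5 b1 b2 b3 b4 f1 f2 f3 f4 f5 i = f5 (i - b4) := by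
    intro i hi1
    rcases Nat.eq_or_lt_of_le hi1 with rfl | hlt
    · rw [E4 _ h34 le_rfl, Nat.sub_self, ← e4]
    · simp only [pw5, if_neg (by omega : ¬ i ≤ b1), if_neg (by omega : ¬ i ≤ b2),
        if_neg (by omega : ¬ i ≤ b3), if_neg (by omega : ¬ i ≤ b4)]
  exact ⟨E1, E2, E3, E4, E5⟩

lemma pw5_adj (b1 b2 b3 b4 N : ℕ) (f1 f2 f3 f4 f5 : ℕ → W)
    (h12 : b1 ≤ b2) (h23 : b2 ≤ b3) (h34 : b3 ≤ b4) (h4N : b4 ≤ N)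
    (e1 : f1 b1 = f2 0) (e2 : f2 (b2 - b1) = f3 0) (e3 : f3 (b3 - b2) = f4 0)
    (e4 : f4 (b4 - b3) = f5 0)
    (a1 : ∀ i, i < b1 → H.Adj (f1 i) (f1 (i+1)))
    (a2 : ∀ j, j < b2 - b1 → H.Adj (f2 j) (f2 (j+1)))
    (a3 : ∀ j, j < b3 - b2 → H.Adj (f3 j) (f3 (j+1)))
    (a4 : ∀ j, j < b4 - b3 → H.Adj (f4 j) (f4 (j+1)))
    (a5 : ∀ j, j < N - b4 → H.Adj (f5 j) (f5 (j+1))) :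
    ∀ i, i < N → H.Adj (pw5 b1 b2 b3 b4 f1 f2 f3 f4 f5 i)
      (pw5 b1 b2 b3 b4 f1 f2 f3 f4 f5 (i+1)) := by
  obtain ⟨E1, E2, E3, E4, E5⟩ := pw5_closed b1 b2 b3 b4 f1 f2 f3 f4 f5 h12 h23 h34 e1 e2 e3 e4
  intro i hi
  by_cases c1 : i < b1
  · rw [E1 i (by omega), E1 (i+1) (by omega)]
    exact a1 i c1
  · by_cases c2 : i < b2
    · rw [E2 i (by omega) (by omega), E2 (i+1) (by omega) (by omega),
        (by omega : i + 1 - b1 = (i - b1) + 1)]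
      exact a2 (i - b1) (by omega)
    · by_cases c3 : i < b3
      · rw [E3 i (by omega) (by omega), E3 (i+1) (by omega) (by omega),
          (by omega : i + 1 - b2 = (i - b2) + 1)]
        exact a3 (i - b2) (by omega)
      · by_cases c4 : i < b4
        · rw [E4 i (by omega) (by omega), E4 (i+1) (by omega) (by omega),
            (by omega : i + 1 - b3 = (i - b3) + 1)]
          exact a4 (i - b3) (by omega)
        · rw [E5 i (by omega), E5 (i+1) (by omega),
            (by omega : i + 1 - b4 = (i - b4) + 1)]
          exact a5 (i - b4) (by omega)

lemma pw5_mem (b1 b2 b3 b4 : ℕ) (f1 f2 f3 f4 f5 : ℕ → W) (S1 S2 S3 S4 S5 : ℕ → Set W)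
    (h1 : ∀ i, f1 i ∈ S1 i) (h2 : ∀ i, f2 i ∈ S2 i) (h3 : ∀ i, f3 i ∈ S3 i)
    (h4 : ∀ i, f4 i ∈ S4 i) (h5 : ∀ i, f5 i ∈ S5 i) :
    ∀ i, pw5 b1 b2 b3 b4 f1 f2 f3 f4 f5 i ∈ pw5 b1 b2 b3 b4 S1 S2 S3 S4 S5 i := by
  intro i
  simp only [pw5]
  split_ifs <;> [exact h1 i; exact h2 _; exact h3 _; exact h4 _; exact h5 _]

end Helpers


/-- Data of three parallel walks: `x, y` from `α`, `z` from `β`, ending in `e1, e2, e3`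
respectively, with `x` and `y` avoiding `z`, of common even length. -/
def WalkTriple {W : Type} (H : SimpleGraph W) (α β e1 e2 e3 : W) : Prop :=
  ∃ ℓ : ℕ, ∃ x y z : ℕ → W, x 0 = α ∧ x ℓ = e1 ∧ y 0 = α ∧ y ℓ = e2 ∧ z 0 = β ∧ z ℓ = e3 ∧
    (∀ i, i < ℓ → H.Adj (x i) (x (i+1))) ∧ (∀ i, i < ℓ → H.Adj (y i) (y (i+1))) ∧
    (∀ i, i < ℓ → H.Adj (z i) (z (i+1))) ∧
    (∀ i, i < ℓ → ¬ H.Adj (x i) (z (i+1))) ∧ (∀ i, i < ℓ → ¬ H.Adj (y i) (z (i+1))) ∧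
    ℓ % 2 = 0

set_option maxHeartbeats 3200000 in
lemma gadget_main {W : Type} (H : SimpleGraph W) (α β γ α' β' : W)
    (hab : α ≠ β) (hag : α ≠ γ) (hbg : β ≠ γ)
    (haa' : H.Adj α α') (hbb' : H.Adj β β')
    (nab' : ¬ H.Adj α β') (nba' : ¬ H.Adj β α')
    (hW1 : WalkTriple H α β α γ β)
    (hW2 : WalkTriple H α β β γ α)
    (ℓ2 : ℕ) (p' q' : ℕ → W)
    (hp'0 : p' 0 = α) (hp'l : p' ℓ2 = β) (hq'0 : q' 0 = β) (hq'l : q' ℓ2 = α)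
    (ap' : ∀ i, i < ℓ2 → H.Adj (p' i) (p' (i+1)))
    (aq' : ∀ i, i < ℓ2 → H.Adj (q' i) (q' (i+1)))
    (av2 : ∀ i, i < ℓ2 → ¬ H.Adj (q' i) (p' (i+1)))
    (hl2e : ℓ2 % 2 = 0) (g : ℕ) :
    ∃ (n : ℕ) (q : Fin (2 * n + 1)) (L : Fin (2 * n + 1) → Set W),
      (q : ℕ) % 2 = 0 ∧ q ≠ 0 ∧ q ≠ Fin.last (2 * n) ∧
      L 0 = {α, β} ∧ L (Fin.last (2 * n)) = {α, β} ∧ L q = {α, β, γ} ∧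
      (∀ a ∈ ({α, β} : Set W),
        ∃ φ, ListHomRel (SimpleGraph.pathGraph (2 * n + 1)) H.Adj L φ ∧
          φ 0 = a ∧ φ (Fin.last (2 * n)) = a ∧ φ q ≠ γ) ∧
      (∃ φ, ListHomRel (SimpleGraph.pathGraph (2 * n + 1)) H.Adj L φ ∧
        φ 0 = α ∧ φ (Fin.last (2 * n)) = β ∧ φ q = γ) ∧
      (∀ φ, ListHomRel (SimpleGraph.pathGraph (2 * n + 1)) H.Adj L φ →
        φ 0 = α → φ (Fin.last (2 * n)) = β → φ q = γ) ∧
      g / 2 ≤ (SimpleGraph.pathGraph (2 * n + 1)).dist 0 q ∧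
      g / 2 ≤ (SimpleGraph.pathGraph (2 * n + 1)).dist (Fin.last (2 * n)) q := by
  classical
  obtain ⟨ℓ3, x, y, z, hx0, hxl, hy0, hyl, hz0, hzl, ax, ay, az, avxz, avyz, hl3e⟩ := hW1
  obtain ⟨ℓ4, x', y', z', hx'0, hx'l, hy'0, hy'l, hz'0, hz'l, ax', ay', az', avx'z', avy'z',
    hl4e⟩ := hW2
  set k := g + 1 with hk
  set b1 := 2 * k with hb1
  set b2 := b1 + ℓ3 with hb2
  set b3 := b2 + ℓ4 with hb3
  set b4 := b3 + ℓ2 with hb4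
  set N := b4 + 2 * k with hN
  set nn := N / 2 with hnn
  have h2n : 2 * nn = N := by omega
  -- the two oscillating tracks
  set oA : ℕ → W := fun i => if i % 2 = 0 then α else α' with hoA
  set oB : ℕ → W := fun i => if i % 2 = 0 then β else β' with hoB
  have oAe : ∀ i, i % 2 = 0 → oA i = α := by intro i h; rw [hoA]; simp [h]
  have oBe : ∀ i, i % 2 = 0 → oB i = β := by intro i h; rw [hoB]; simp [h]
  have adjA : ∀ i, H.Adj (oA i) (oA (i+1)) := by
    intro i
    rw [hoA]
    by_cases h : i % 2 = 0
    · have h2 : ¬ (i+1) % 2 = 0 := by omega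
      simp only [h, h2, if_true, if_false]
      exact haa'
    · have h2 : (i+1) % 2 = 0 := by omega
      simp only [h, h2, if_true, if_false]
      exact haa'.symm
  have adjB : ∀ i, H.Adj (oB i) (oB (i+1)) := by
    intro i
    rw [hoB]
    by_cases h : i % 2 = 0
    · have h2 : ¬ (i+1) % 2 = 0 := by omega
      simp only [h, h2, if_true, if_false]
      exact hbb'
    · have h2 : (i+1) % 2 = 0 := by omega
      simp only [h, h2, if_true, if_false]
      exact hbb'.symm
  have avAB : ∀ i, ¬ H.Adj (oA i) (oB (i+1)) := by
    intro i
    rw [hoA, hoB]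
    by_cases h : i % 2 = 0
    · have h2 : ¬ (i+1) % 2 = 0 := by omega
      simp only [h, h2, if_true, if_false]
      exact nab'
    · have h2 : (i+1) % 2 = 0 := by omega
      simp only [h, h2, if_true, if_false]
      exact fun hadj => nba' hadj.symm
  -- the lists
  set L' : ℕ → Set W := pw5 b1 b2 b3 b4 (fun i => {oA i, oB i}) (fun j => {x j, y j, z j})
    (fun j => {x' (ℓ4 - j), y' (ℓ4 - j), z' (ℓ4 - j)}) (fun j => {p' j, q' j})
    (fun j => {oA j, oB j}) with hL'
  have hb1e : b1 % 2 = 0 := by omega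
  obtain ⟨EL1, EL2, EL3, EL4, EL5⟩ := pw5_closed b1 b2 b3 b4
    (fun i => ({oA i, oB i} : Set W)) (fun j => {x j, y j, z j})
    (fun j => {x' (ℓ4 - j), y' (ℓ4 - j), z' (ℓ4 - j)}) (fun j => {p' j, q' j})
    (fun j => {oA j, oB j}) (by omega) (by omega) (by omega)
    (by
      rw [oAe b1 hb1e, oBe b1 hb1e, hx0, hy0, hz0]
      ext t; simp only [Set.mem_insert_iff, Set.mem_singleton_iff]; tauto)
    (by
      rw [(by omega : b2 - b1 = ℓ3), (by simp : ℓ4 - 0 = ℓ4), hxl, hyl, hzl, hx'l, hy'l, hz'l]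
      ext t; simp only [Set.mem_insert_iff, Set.mem_singleton_iff]; tauto)
    (by
      rw [(by omega : b3 - b2 = ℓ4), Nat.sub_self, hx'0, hy'0, hz'0, hp'0, hq'0]
      ext t; simp only [Set.mem_insert_iff, Set.mem_singleton_iff]; tauto)
    (by
      rw [(by omega : b4 - b3 = ℓ2), hp'l, hq'l, oAe 0 (by omega), oBe 0 (by omega)]
      ext t; simp only [Set.mem_insert_iff, Set.mem_singleton_iff]; tauto)
  -- beta-reduced closed evaluations of the lists
  have ELs : (∀ i, i ≤ b1 → L' i = {oA i, oB i}) ∧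
      (∀ i, b1 ≤ i → i ≤ b2 → L' i = {x (i - b1), y (i - b1), z (i - b1)}) ∧
      (∀ i, b2 ≤ i → i ≤ b3 → L' i = {x' (ℓ4 - (i - b2)), y' (ℓ4 - (i - b2)), z' (ℓ4 - (i - b2))}) ∧
      (∀ i, b3 ≤ i → i ≤ b4 → L' i = {p' (i - b3), q' (i - b3)}) ∧
      (∀ i, b4 ≤ i → L' i = {oA (i - b4), oB (i - b4)}) := ⟨EL1, EL2, EL3, EL4, EL5⟩
  clear EL1 EL2 EL3 EL4 EL5
  obtain ⟨EL1, EL2, EL3, EL4, EL5⟩ := ELs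
  -- reversed-walk adjacency helper
  have rev_adj : ∀ (f : ℕ → W) (ℓ : ℕ), (∀ i, i < ℓ → H.Adj (f i) (f (i+1))) →
      ∀ j, j < ℓ → H.Adj (f (ℓ - j)) (f (ℓ - (j+1))) := by
    intro f ℓ hf j hj
    have h1 : ℓ - j = (ℓ - (j+1)) + 1 := by omega
    rw [h1]
    exact (hf (ℓ - (j+1)) (by omega)).symm
  -- generic glue for building list homomorphisms from ℕ-indexed data
  have mkhom : ∀ (φ' : ℕ → W), (∀ i, φ' i ∈ L' i) → (∀ i, i < N → H.Adj (φ' i) (φ' (i+1))) →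
      ListHomRel (SimpleGraph.pathGraph (2*nn+1)) H.Adj (fun v => L' v.val)
        (fun v => φ' v.val) := by
    intro φ' hm ha
    refine ⟨fun v => hm v.val, ?_⟩
    intro u v huv
    rw [SimpleGraph.pathGraph_adj] at huv
    rcases huv with h | h
    · have h1 : (u : ℕ) < N := by have := v.isLt; omega
      have h2 := ha u.val h1
      rwa [h] at h2
    · have h1 : (v : ℕ) < N := by have := u.isLt; omega
      have h2 := ha v.val h1
      rw [h] at h2
      exact h2.symm
  -- the three explicit homomorphisms
  set φA : ℕ → W := pw5 b1 b2 b3 b4 oA x (fun j => z' (ℓ4 - j)) q' oA with hφA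
  set φB : ℕ → W := pw5 b1 b2 b3 b4 oB z (fun j => x' (ℓ4 - j)) p' oB with hφB
  set φC : ℕ → W := pw5 b1 b2 b3 b4 oA y (fun j => y' (ℓ4 - j)) p' oB with hφC
  have eA1 : oA b1 = x 0 := by rw [oAe b1 hb1e, hx0]
  have eA2 : x (b2 - b1) = z' (ℓ4 - 0) := by
    rw [(by omega : b2 - b1 = ℓ3), Nat.sub_zero, hxl, hz'l]
  have eA3 : z' (ℓ4 - (b3 - b2)) = q' 0 := by
    rw [(by omega : ℓ4 - (b3 - b2) = 0), hz'0, hq'0]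
  have eA4 : q' (b4 - b3) = oA 0 := by
    rw [(by omega : b4 - b3 = ℓ2), hq'l, oAe 0 (by omega)]
  have eB1 : oB b1 = z 0 := by rw [oBe b1 hb1e, hz0]
  have eB2 : z (b2 - b1) = x' (ℓ4 - 0) := by
    rw [(by omega : b2 - b1 = ℓ3), Nat.sub_zero, hzl, hx'l]
  have eB3 : x' (ℓ4 - (b3 - b2)) = p' 0 := by
    rw [(by omega : ℓ4 - (b3 - b2) = 0), hx'0, hp'0]
  have eB4 : p' (b4 - b3) = oB 0 := by
    rw [(by omega : b4 - b3 = ℓ2), hp'l, oBe 0 (by omega)]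
  have eC1 : oA b1 = y 0 := by rw [oAe b1 hb1e, hy0]
  have eC2 : y (b2 - b1) = y' (ℓ4 - 0) := by
    rw [(by omega : b2 - b1 = ℓ3), Nat.sub_zero, hyl, hy'l]
  have eC3 : y' (ℓ4 - (b3 - b2)) = p' 0 := by
    rw [(by omega : ℓ4 - (b3 - b2) = 0), hy'0, hp'0]
  have eC4 : p' (b4 - b3) = oB 0 := eB4
  obtain ⟨EA1, EA2, EA3, EA4, EA5⟩ : (∀ i, i ≤ b1 → φA i = oA i) ∧
      (∀ i, b1 ≤ i → i ≤ b2 → φA i = x (i - b1)) ∧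
      (∀ i, b2 ≤ i → i ≤ b3 → φA i = z' (ℓ4 - (i - b2))) ∧
      (∀ i, b3 ≤ i → i ≤ b4 → φA i = q' (i - b3)) ∧
      (∀ i, b4 ≤ i → φA i = oA (i - b4)) := by
    rw [hφA]; exact pw5_closed _ _ _ _ _ _ _ _ _ (by omega) (by omega) (by omega) eA1 eA2 eA3 eA4
  obtain ⟨EB1, EB2, EB3, EB4, EB5⟩ : (∀ i, i ≤ b1 → φB i = oB i) ∧
      (∀ i, b1 ≤ i → i ≤ b2 → φB i = z (i - b1)) ∧
      (∀ i, b2 ≤ i → i ≤ b3 → φB i = x' (ℓ4 - (i - b2))) ∧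
      (∀ i, b3 ≤ i → i ≤ b4 → φB i = p' (i - b3)) ∧
      (∀ i, b4 ≤ i → φB i = oB (i - b4)) := by
    rw [hφB]; exact pw5_closed _ _ _ _ _ _ _ _ _ (by omega) (by omega) (by omega) eB1 eB2 eB3 eB4
  obtain ⟨EC1, EC2, EC3, EC4, EC5⟩ : (∀ i, i ≤ b1 → φC i = oA i) ∧
      (∀ i, b1 ≤ i → i ≤ b2 → φC i = y (i - b1)) ∧
      (∀ i, b2 ≤ i → i ≤ b3 → φC i = y' (ℓ4 - (i - b2))) ∧
      (∀ i, b3 ≤ i → i ≤ b4 → φC i = p' (i - b3)) ∧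
      (∀ i, b4 ≤ i → φC i = oB (i - b4)) := by
    rw [hφC]; exact pw5_closed _ _ _ _ _ _ _ _ _ (by omega) (by omega) (by omega) eC1 eC2 eC3 eC4
  have adjAw : ∀ i, i < N → H.Adj (φA i) (φA (i+1)) := by
    rw [hφA]
    exact pw5_adj b1 b2 b3 b4 N _ _ _ _ _ (by omega) (by omega) (by omega) (by omega)
      eA1 eA2 eA3 eA4 (fun i _ => adjA i) (fun j hj => ax j (by omega))
      (fun j hj => rev_adj z' ℓ4 az' j (by omega)) (fun j hj => aq' j (by omega))
      (fun j _ => adjA j)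
  have adjBw : ∀ i, i < N → H.Adj (φB i) (φB (i+1)) := by
    rw [hφB]
    exact pw5_adj b1 b2 b3 b4 N _ _ _ _ _ (by omega) (by omega) (by omega) (by omega)
      eB1 eB2 eB3 eB4 (fun i _ => adjB i) (fun j hj => az j (by omega))
      (fun j hj => rev_adj x' ℓ4 ax' j (by omega)) (fun j hj => ap' j (by omega))
      (fun j _ => adjB j)
  have adjCw : ∀ i, i < N → H.Adj (φC i) (φC (i+1)) := by
    rw [hφC]
    exact pw5_adj b1 b2 b3 b4 N _ _ _ _ _ (by omega) (by omega) (by omega) (by omega)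
      eC1 eC2 eC3 eC4 (fun i _ => adjA i) (fun j hj => ay j (by omega))
      (fun j hj => rev_adj y' ℓ4 ay' j (by omega)) (fun j hj => ap' j (by omega))
      (fun j _ => adjB j)
  have memAw : ∀ i, φA i ∈ L' i := by
    rw [hφA, hL']
    exact pw5_mem _ _ _ _ _ _ _ _ _ _ _ _ _ _ (fun i => by simp) (fun j => by simp)
      (fun j => by simp) (fun j => by simp) (fun j => by simp)
  have memBw : ∀ i, φB i ∈ L' i := by
    rw [hφB, hL']
    exact pw5_mem _ _ _ _ _ _ _ _ _ _ _ _ _ _ (fun i => by simp) (fun j => by simp)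
      (fun j => by simp) (fun j => by simp) (fun j => by simp)
  have memCw : ∀ i, φC i ∈ L' i := by
    rw [hφC, hL']
    exact pw5_mem _ _ _ _ _ _ _ _ _ _ _ _ _ _ (fun i => by simp) (fun j => by simp)
      (fun j => by simp) (fun j => by simp) (fun j => by simp)
  -- values of the three homomorphisms at the special vertices
  have hA0 : φA 0 = α := by rw [EA1 0 (by omega)]; exact oAe 0 (by omega)
  have hAq : φA b2 = α := by
    rw [EA2 b2 (by omega) (by omega), (by omega : b2 - b1 = ℓ3)]; exact hxl
  have hAN : φA N = α := by rw [EA5 N (by omega)]; exact oAe (N - b4) (by omega)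
  have hB0 : φB 0 = β := by rw [EB1 0 (by omega)]; exact oBe 0 (by omega)
  have hBq : φB b2 = β := by
    rw [EB2 b2 (by omega) (by omega), (by omega : b2 - b1 = ℓ3)]; exact hzl
  have hBN : φB N = β := by rw [EB5 N (by omega)]; exact oBe (N - b4) (by omega)
  have hC0 : φC 0 = α := by rw [EC1 0 (by omega)]; exact oAe 0 (by omega)
  have hCq : φC b2 = γ := by
    rw [EC2 b2 (by omega) (by omega), (by omega : b2 - b1 = ℓ3)]; exact hyl
  have hCN : φC N = β := by rw [EC5 N (by omega)]; exact oBe (N - b4) (by omega)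
  -- assemble
  refine ⟨nn, ⟨b2, by omega⟩, fun v => L' v.val, ?_, ?_, ?_, ?_, ?_, ?_, ?_, ?_, ?_, ?_, ?_⟩
  · show b2 % 2 = 0
    omega
  · intro h
    have := congrArg Fin.val h
    simp only [Fin.val_zero] at this
    omega
  · intro h
    have := congrArg Fin.val h
    simp only [Fin.val_last] at this
    omega
  · show L' ((0 : Fin (2*nn+1)) : ℕ) = {α, β}
    rw [(by simp : ((0 : Fin (2*nn+1)) : ℕ) = 0), EL1 0 (by omega),
      oAe 0 (by omega), oBe 0 (by omega)]
  · show L' ((Fin.last (2*nn) : Fin (2*nn+1)) : ℕ) = {α, β}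
    rw [Fin.val_last, h2n, EL5 N (by omega), oAe (N - b4) (by omega), oBe (N - b4) (by omega)]
  · show L' b2 = {α, β, γ}
    rw [EL2 b2 (by omega) (by omega), (by omega : b2 - b1 = ℓ3), hxl, hyl, hzl]
    ext t; simp only [Set.mem_insert_iff, Set.mem_singleton_iff]; tauto
  · -- (S2)
    intro a ha
    simp only [Set.mem_insert_iff, Set.mem_singleton_iff] at ha
    rcases ha with rfl | rfl
    · refine ⟨fun v => φA v.val, mkhom φA memAw adjAw, ?_, ?_, ?_⟩
      · show φA ((0 : Fin (2*nn+1)) : ℕ) = a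
        rw [(by simp : ((0 : Fin (2*nn+1)) : ℕ) = 0)]; exact hA0
      · show φA ((Fin.last (2*nn) : Fin (2*nn+1)) : ℕ) = a
        rw [Fin.val_last, h2n]; exact hAN
      · show φA b2 ≠ γ
        rw [hAq]; exact hag
    · refine ⟨fun v => φB v.val, mkhom φB memBw adjBw, ?_, ?_, ?_⟩
      · show φB ((0 : Fin (2*nn+1)) : ℕ) = a
        rw [(by simp : ((0 : Fin (2*nn+1)) : ℕ) = 0)]; exact hB0
      · show φB ((Fin.last (2*nn) : Fin (2*nn+1)) : ℕ) = a
        rw [Fin.val_last, h2n]; exact hBN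
      · show φB b2 ≠ γ
        rw [hBq]; exact hbg
  · -- (S3)
    refine ⟨fun v => φC v.val, mkhom φC memCw adjCw, ?_, ?_, ?_⟩
    · show φC ((0 : Fin (2*nn+1)) : ℕ) = α
      rw [(by simp : ((0 : Fin (2*nn+1)) : ℕ) = 0)]; exact hC0
    · show φC ((Fin.last (2*nn) : Fin (2*nn+1)) : ℕ) = β
      rw [Fin.val_last, h2n]; exact hCN
    · show φC b2 = γ
      exact hCq
  · -- (S4)
    intro φ hφ h0 hlast
    set ψ : ℕ → W := fun i => φ ⟨i % (2*nn+1), Nat.mod_lt _ (by omega)⟩ with hψdef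
    have ψeq : ∀ (i : ℕ) (h : i < 2*nn+1), ψ i = φ ⟨i, h⟩ := by
      intro i h
      rw [hψdef]
      exact congrArg φ (Fin.ext (Nat.mod_eq_of_lt h))
    have hmemψ : ∀ i, i ≤ N → ψ i ∈ L' i := by
      intro i hi
      have h := hφ.1 ⟨i, by omega⟩
      rw [← ψeq i (by omega)] at h
      exact h
    have hadjψ : ∀ i, i < N → H.Adj (ψ i) (ψ (i+1)) := by
      intro i hi
      rw [ψeq i (by omega), ψeq (i+1) (by omega)]
      apply hφ.2
      rw [SimpleGraph.pathGraph_adj]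
      left
      rfl
    have hψ0 : ψ 0 = α := by
      rw [ψeq 0 (by omega), (by exact Fin.ext (by simp) : (⟨0, by omega⟩ : Fin (2*nn+1)) = 0)]
      exact h0
    have hψN : ψ N = β := by
      rw [ψeq N (by omega),
        (by exact Fin.ext (by simp [h2n]) : (⟨N, by omega⟩ : Fin (2*nn+1)) = Fin.last (2*nn))]
      exact hlast
    have seg1 := seg_force (H := H) b1 oA oA oB ψ
      (by
        intro i hi
        have h := hmemψ i (by omega)
        rw [EL1 i hi] at h
        simp only [Set.mem_insert_iff, Set.mem_singleton_iff] at h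
        tauto)
      (fun i hi => hadjψ i (by omega))
      (fun i _ => avAB i) (fun i _ => avAB i)
      (by left; rw [hψ0]; exact (oAe 0 (by omega)).symm)
    have hψb1 : ψ b1 = α := by
      rcases seg1 b1 le_rfl with h | h <;> rw [h] <;> exact oAe b1 hb1e
    have seg2 := seg_force (H := H) ℓ3 x y z (fun j => ψ (b1 + j))
      (by
        intro j hj
        rcases Nat.eq_zero_or_pos j with rfl | hpos
        · left; show ψ (b1 + 0) = x 0; rw [Nat.add_zero, hψb1, hx0]
        · have h := hmemψ (b1 + j) (by omega)
          rw [EL2 (b1+j) (by omega) (by omega), (by omega : b1 + j - b1 = j)] at h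
          simp only [Set.mem_insert_iff, Set.mem_singleton_iff] at h
          exact h)
      (by
        intro j hj
        have h := hadjψ (b1 + j) (by omega)
        rwa [(by omega : b1 + j + 1 = b1 + (j+1))] at h)
      avxz avyz
      (by left; show ψ (b1 + 0) = x 0; rw [Nat.add_zero, hψb1, hx0])
    have hqval : ψ b2 = α ∨ ψ b2 = γ := by
      have h := seg2 ℓ3 le_rfl
      beta_reduce at h
      rw [(by omega : b1 + ℓ3 = b2)] at h
      rcases h with h | h
      · left; rw [h, hxl]
      · right; rw [h, hyl]
    rcases hqval with hA | hG
    · exfalso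
      -- forced continuation: output must be α, contradiction
      have hψb3 : ψ b3 = β := by
        have h := hmemψ b3 (by omega)
        rw [EL3 b3 (by omega) (by omega), (by omega : ℓ4 - (b3 - b2) = 0),
          hx'0, hy'0, hz'0] at h
        simp only [Set.mem_insert_iff, Set.mem_singleton_iff] at h
        have h' : ψ b3 = α ∨ ψ b3 = β := by tauto
        rcases h' with h' | h'
        · exfalso
          have seg3 := seg_force (H := H) ℓ4 x' y' z' (fun j => ψ (b3 - j))
            (by
              intro j hj
              rcases Nat.eq_or_lt_of_le hj with rfl | hlt
              · right; right
                show ψ (b3 - j) = z' j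
                rw [(by omega : b3 - j = b2), hA, hz'l]
              · have hm := hmemψ (b3 - j) (by omega)
                rw [EL3 (b3 - j) (by omega) (by omega),
                  (by omega : ℓ4 - (b3 - j - b2) = j)] at hm
                simp only [Set.mem_insert_iff, Set.mem_singleton_iff] at hm
                exact hm)
            (by
              intro j hj
              have h := hadjψ (b3 - (j+1)) (by omega)
              rw [(by omega : b3 - (j+1) + 1 = b3 - j)] at h
              exact h.symm)
            avx'z' avy'z'
            (by left; show ψ (b3 - 0) = x' 0; rw [Nat.sub_zero, h', hx'0])
          have h2 := seg3 ℓ4 le_rfl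
          beta_reduce at h2
          rw [(by omega : b3 - ℓ4 = b2)] at h2
          rcases h2 with h2 | h2
          · rw [hA, hx'l] at h2; exact hab h2
          · rw [hA, hy'l] at h2; exact hag h2
        · exact h'
      have seg4 := seg_force (H := H) ℓ2 q' q' p' (fun j => ψ (b3 + j))
        (by
          intro j hj
          rcases Nat.eq_zero_or_pos j with rfl | hpos
          · left; show ψ (b3 + 0) = q' 0; rw [Nat.add_zero, hψb3, hq'0]
          · have h := hmemψ (b3 + j) (by omega)
            rw [EL4 (b3 + j) (by omega) (by omega), (by omega : b3 + j - b3 = j)] at h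
            simp only [Set.mem_insert_iff, Set.mem_singleton_iff] at h
            tauto)
        (by
          intro j hj
          have h := hadjψ (b3 + j) (by omega)
          rwa [(by omega : b3 + j + 1 = b3 + (j+1))] at h)
        av2 av2
        (by left; show ψ (b3 + 0) = q' 0; rw [Nat.add_zero, hψb3, hq'0])
      have hψb4 : ψ b4 = α := by
        have h := seg4 ℓ2 le_rfl
        beta_reduce at h
        rw [(by omega : b3 + ℓ2 = b4)] at h
        rcases h with h | h <;> (rw [h]; exact hq'l)
      have seg5 := seg_force (H := H) (2*k) oA oA oB (fun j => ψ (b4 + j))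
        (by
          intro j hj
          rcases Nat.eq_zero_or_pos j with rfl | hpos
          · left; show ψ (b4 + 0) = oA 0; rw [Nat.add_zero, hψb4, oAe 0 (by omega)]
          · have h := hmemψ (b4 + j) (by omega)
            rw [EL5 (b4 + j) (by omega), (by omega : b4 + j - b4 = j)] at h
            simp only [Set.mem_insert_iff, Set.mem_singleton_iff] at h
            tauto)
        (by
          intro j hj
          have h := hadjψ (b4 + j) (by omega)
          rwa [(by omega : b4 + j + 1 = b4 + (j+1))] at h)
        (fun i _ => avAB i) (fun i _ => avAB i)
        (by left; show ψ (b4 + 0) = oA 0; rw [Nat.add_zero, hψb4, oAe 0 (by omega)])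
      have hend : ψ N = α := by
        have h := seg5 (2*k) le_rfl
        beta_reduce at h
        rw [(by omega : b4 + 2*k = N)] at h
        rcases h with h | h <;> (rw [h]; exact oAe (2*k) (by omega))
      exact hab (hend.symm.trans hψN)
    · -- ψ b2 = γ
      rw [← ψeq b2 (by omega)]
      exact hG
  · -- distance from 0 to q
    obtain ⟨pp, hpp⟩ := (SimpleGraph.pathGraph_connected (2*nn)).exists_walk_length_eq_dist
      0 ⟨b2, by omega⟩
    have hb := pathGraph_walk_val_bound pp
    rw [← hpp]
    have h1 := hb.1
    simp only [Fin.val_zero] at h1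
    omega
  · -- distance from the last vertex to q
    obtain ⟨pp, hpp⟩ := (SimpleGraph.pathGraph_connected (2*nn)).exists_walk_length_eq_dist
      (Fin.last (2*nn)) ⟨b2, by omega⟩
    have hb := pathGraph_walk_val_bound pp
    rw [← hpp]
    have h1 := hb.2
    simp only [Fin.val_last] at h1
    omega


/-- A three-term sequence (constant after index 2). -/
def seq3 {A : Type} (a b c : A) : ℕ → A
  | 0 => a
  | 1 => b
  | _ => c

/-- A five-term sequence (constant after index 4). -/
def seq5 {A : Type} (a b c d e : A) : ℕ → A
  | 0 => a
  | 1 => b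
  | 2 => c
  | 3 => d
  | _ => e

lemma walkTriples_of_cycle6 {W : Type} {H : SimpleGraph W} {w : Fin 6 → W}
    (hcyc : IsInducedCycleOn H w) :
    WalkTriple H (w 0) (w 4) (w 0) (w 2) (w 4) ∧ WalkTriple H (w 0) (w 4) (w 4) (w 2) (w 0) := by
  have adj : ∀ i j : Fin 6, ((j:ℕ) = ((i:ℕ)+1)%6 ∨ (i:ℕ) = ((j:ℕ)+1)%6) → H.Adj (w i) (w j) :=
    fun i j h => (hcyc.2 i j).mpr h
  have nadj : ∀ i j : Fin 6, ¬((j:ℕ) = ((i:ℕ)+1)%6 ∨ (i:ℕ) = ((j:ℕ)+1)%6) →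
      ¬ H.Adj (w i) (w j) := fun i j h hh => h ((hcyc.2 i j).mp hh)
  constructor
  · refine ⟨2, seq3 (w 0) (w 1) (w 0), seq3 (w 0) (w 1) (w 2), seq3 (w 4) (w 3) (w 4),
      rfl, rfl, rfl, rfl, rfl, rfl, ?_, ?_, ?_, ?_, ?_, rfl⟩
    · intro i hi; interval_cases i
      · exact adj 0 1 (by decide)
      · exact adj 1 0 (by decide)
    · intro i hi; interval_cases i
      · exact adj 0 1 (by decide)
      · exact adj 1 2 (by decide)
    · intro i hi; interval_cases i
      · exact adj 4 3 (by decide)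
      · exact adj 3 4 (by decide)
    · intro i hi; interval_cases i
      · exact nadj 0 3 (by decide)
      · exact nadj 1 4 (by decide)
    · intro i hi; interval_cases i
      · exact nadj 0 3 (by decide)
      · exact nadj 1 4 (by decide)
  · refine ⟨4, seq5 (w 0) (w 1) (w 2) (w 3) (w 4), seq5 (w 0) (w 1) (w 2) (w 3) (w 2),
      seq5 (w 4) (w 3) (w 4) (w 5) (w 0),
      rfl, rfl, rfl, rfl, rfl, rfl, ?_, ?_, ?_, ?_, ?_, rfl⟩
    · intro i hi; interval_cases i
      · exact adj 0 1 (by decide)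
      · exact adj 1 2 (by decide)
      · exact adj 2 3 (by decide)
      · exact adj 3 4 (by decide)
    · intro i hi; interval_cases i
      · exact adj 0 1 (by decide)
      · exact adj 1 2 (by decide)
      · exact adj 2 3 (by decide)
      · exact adj 3 2 (by decide)
    · intro i hi; interval_cases i
      · exact adj 4 3 (by decide)
      · exact adj 3 4 (by decide)
      · exact adj 4 5 (by decide)
      · exact adj 5 0 (by decide)
    · intro i hi; interval_cases i
      · exact nadj 0 3 (by decide)
      · exact nadj 1 4 (by decide)
      · exact nadj 2 5 (by decide)
      · exact nadj 3 0 (by decide)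
    · intro i hi; interval_cases i
      · exact nadj 0 3 (by decide)
      · exact nadj 1 4 (by decide)
      · exact nadj 2 5 (by decide)
      · exact nadj 3 0 (by decide)

lemma walkTriples_of_cycle8 {W : Type} {H : SimpleGraph W} {w : Fin 8 → W}
    (hcyc : IsInducedCycleOn H w) :
    WalkTriple H (w 0) (w 4) (w 0) (w 2) (w 4) ∧ WalkTriple H (w 0) (w 4) (w 4) (w 2) (w 0) := by
  have adj : ∀ i j : Fin 8, ((j:ℕ) = ((i:ℕ)+1)%8 ∨ (i:ℕ) = ((j:ℕ)+1)%8) → H.Adj (w i) (w j) :=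
    fun i j h => (hcyc.2 i j).mpr h
  have nadj : ∀ i j : Fin 8, ¬((j:ℕ) = ((i:ℕ)+1)%8 ∨ (i:ℕ) = ((j:ℕ)+1)%8) →
      ¬ H.Adj (w i) (w j) := fun i j h hh => h ((hcyc.2 i j).mp hh)
  constructor
  · refine ⟨2, seq3 (w 0) (w 1) (w 0), seq3 (w 0) (w 1) (w 2), seq3 (w 4) (w 5) (w 4),
      rfl, rfl, rfl, rfl, rfl, rfl, ?_, ?_, ?_, ?_, ?_, rfl⟩
    · intro i hi; interval_cases i
      · exact adj 0 1 (by decide)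
      · exact adj 1 0 (by decide)
    · intro i hi; interval_cases i
      · exact adj 0 1 (by decide)
      · exact adj 1 2 (by decide)
    · intro i hi; interval_cases i
      · exact adj 4 5 (by decide)
      · exact adj 5 4 (by decide)
    · intro i hi; interval_cases i
      · exact nadj 0 5 (by decide)
      · exact nadj 1 4 (by decide)
    · intro i hi; interval_cases i
      · exact nadj 0 5 (by decide)
      · exact nadj 1 4 (by decide)
  · refine ⟨4, seq5 (w 0) (w 1) (w 2) (w 3) (w 4), seq5 (w 0) (w 1) (w 2) (w 3) (w 2),
      seq5 (w 4) (w 5) (w 6) (w 7) (w 0),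
      rfl, rfl, rfl, rfl, rfl, rfl, ?_, ?_, ?_, ?_, ?_, rfl⟩
    · intro i hi; interval_cases i
      · exact adj 0 1 (by decide)
      · exact adj 1 2 (by decide)
      · exact adj 2 3 (by decide)
      · exact adj 3 4 (by decide)
    · intro i hi; interval_cases i
      · exact adj 0 1 (by decide)
      · exact adj 1 2 (by decide)
      · exact adj 2 3 (by decide)
      · exact adj 3 2 (by decide)
    · intro i hi; interval_cases i
      · exact adj 4 5 (by decide)
      · exact adj 5 6 (by decide)
      · exact adj 6 7 (by decide)
      · exact adj 7 0 (by decide)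
    · intro i hi; interval_cases i
      · exact nadj 0 5 (by decide)
      · exact nadj 1 6 (by decide)
      · exact nadj 2 7 (by decide)
      · exact nadj 3 0 (by decide)
    · intro i hi; interval_cases i
      · exact nadj 0 5 (by decide)
      · exact nadj 1 6 (by decide)
      · exact nadj 2 7 (by decide)
      · exact nadj 3 0 (by decide)


/-- Construction of the switching gadget: under the stated assumptions on `H`, `X`, and
the structural triple `(α,β,γ)`, and for every `g ∈ ℕ`, there is a path `T` of even
length `2n` (here `pathGraph (2n+1)`, with input endvertex `p = 0` and output endvertex
`r = Fin.last (2n)`) with `H`-lists `L` and an internal vertex `q` at an even position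
(hence in the same bipartition class of the path as `p` and `r`) such that:
(S1) `L p = L r = {α,β}` and `L q = {α,β,γ}`;
(S2) for every `a ∈ {α,β}` some list homomorphism maps both `p` and `r` to `a` and maps
`q` to a vertex other than `γ`;
(S3) some list homomorphism maps `p` to `α`, `r` to `β`, and `q` to `γ`;
(S4) every list homomorphism mapping `p` to `α` and `r` to `β` maps `q` to `γ`;
moreover `dist(p,q) ≥ g/2` and `dist(r,q) ≥ g/2`. -/
theorem switching_gadget {W : Type} [Fintype W] (H : SimpleGraph W) (X : Set W)
    (hconn : H.Connected) (hbip : BipClass H X) (hundec : Undecomposable H X)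
    (hnca : ¬ IsCircularArcGraph Hᶜ)
    (α β γ : W) (hα : α ∈ X) (hβ : β ∈ X) (hγ : γ ∈ X)
    (htriple : StructTriple H α β γ) (g : ℕ) :
    ∃ (n : ℕ) (q : Fin (2 * n + 1)) (L : Fin (2 * n + 1) → Set W),
      (q : ℕ) % 2 = 0 ∧ q ≠ 0 ∧ q ≠ Fin.last (2 * n) ∧
      L 0 = {α, β} ∧ L (Fin.last (2 * n)) = {α, β} ∧ L q = {α, β, γ} ∧
      (∀ a ∈ ({α, β} : Set W),
        ∃ φ, ListHomRel (SimpleGraph.pathGraph (2 * n + 1)) H.Adj L φ ∧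
          φ 0 = a ∧ φ (Fin.last (2 * n)) = a ∧ φ q ≠ γ) ∧
      (∃ φ, ListHomRel (SimpleGraph.pathGraph (2 * n + 1)) H.Adj L φ ∧
        φ 0 = α ∧ φ (Fin.last (2 * n)) = β ∧ φ q = γ) ∧
      (∀ φ, ListHomRel (SimpleGraph.pathGraph (2 * n + 1)) H.Adj L φ →
        φ 0 = α → φ (Fin.last (2 * n)) = β → φ q = γ) ∧
      g / 2 ≤ (SimpleGraph.pathGraph (2 * n + 1)).dist 0 q ∧
      g / 2 ≤ (SimpleGraph.pathGraph (2 * n + 1)).dist (Fin.last (2 * n)) q := by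
    classical
  obtain ⟨hmatch, hinc, hwalks, hcase⟩ := htriple
  obtain ⟨α', β', haa', hbb', hab, ha'b'ne, nADJab, nADJa'b', nab', nba'⟩ := hmatch
  have hag : α ≠ γ := by
    intro h; subst h; exact hinc.2.1.1 (Set.Subset.refl _)
  have hbg : β ≠ γ := by
    intro h; subst h; exact hinc.2.2.1 (Set.Subset.refl _)
  -- the avoiding pair of walks from condition (3)
  obtain ⟨P, P', Q, Q', hlenPQ, hlenP'Q', havPQ, havQ'P'⟩ := hwalks
  have hT2data : ∃ ℓ2 : ℕ, ∃ p' q' : ℕ → W, p' 0 = α ∧ p' ℓ2 = β ∧ q' 0 = β ∧ q' ℓ2 = α ∧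
      (∀ i, i < ℓ2 → H.Adj (p' i) (p' (i+1))) ∧ (∀ i, i < ℓ2 → H.Adj (q' i) (q' (i+1))) ∧
      (∀ i, i < ℓ2 → ¬ H.Adj (q' i) (p' (i+1))) ∧ ℓ2 % 2 = 0 := by
    refine ⟨Q'.length, (fun i => P'.getVert i), (fun i => Q'.getVert i),
      SimpleGraph.Walk.getVert_zero _, ?_, SimpleGraph.Walk.getVert_zero _,
      SimpleGraph.Walk.getVert_length _, ?_, ?_, ?_, ?_⟩
    · rw [← hlenP'Q']; exact SimpleGraph.Walk.getVert_length _
    · intro i hi; exact P'.adj_getVert_succ (by omega)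
    · intro i hi; exact Q'.adj_getVert_succ hi
    · exact havQ'P'.2
    · refine walk_parity hbip (fun i => Q'.getVert i) Q'.length
        (fun i hi => Q'.adj_getVert_succ hi) ?_ ?_
      · show Q'.getVert 0 ∈ X
        rw [SimpleGraph.Walk.getVert_zero]; exact hβ
      · show Q'.getVert Q'.length ∈ X
        rw [SimpleGraph.Walk.getVert_length]; exact hα
  obtain ⟨ℓ2, p', q', hp'0, hp'l, hq'0, hq'l, ap', aq', av2, hl2e⟩ := hT2data
  -- the two walk triples, from condition (4)
  have hTT : WalkTriple H α β α γ β ∧ WalkTriple H α β β γ α := by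
    rcases hcase with ⟨w, hcyc, hα0, hβ0, hγ0⟩ | ⟨w, hcyc, hα0, hβ0, hγ0⟩ | ⟨hstr, hall⟩
    · rw [hα0, hβ0, hγ0]; exact walkTriples_of_cycle6 hcyc
    · rw [hα0, hβ0, hγ0]; exact walkTriples_of_cycle8 hcyc
    · constructor
      · obtain ⟨Xc, Yc, Zc, hXZ, hYZ, aXZ, aYZ, _, _⟩ := hall α γ β
          (by ext t; simp only [Set.mem_insert_iff, Set.mem_singleton_iff]; tauto)
        refine ⟨Zc.length, (fun i => Xc.getVert i), (fun i => Yc.getVert i),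
          (fun i => Zc.getVert i), SimpleGraph.Walk.getVert_zero _, ?_,
          SimpleGraph.Walk.getVert_zero _, ?_, SimpleGraph.Walk.getVert_zero _,
          SimpleGraph.Walk.getVert_length _, ?_, ?_, ?_, ?_, ?_, ?_⟩
        · rw [← hXZ]; exact SimpleGraph.Walk.getVert_length _
        · rw [← hYZ]; exact SimpleGraph.Walk.getVert_length _
        · intro i hi; exact Xc.adj_getVert_succ (by omega)
        · intro i hi; exact Yc.adj_getVert_succ (by omega)
        · intro i hi; exact Zc.adj_getVert_succ hi
        · intro i hi; exact aXZ.2 i (by omega)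
        · intro i hi; exact aYZ.2 i (by omega)
        · refine walk_parity hbip (fun i => Zc.getVert i) Zc.length
            (fun i hi => Zc.adj_getVert_succ hi) ?_ ?_
          · show Zc.getVert 0 ∈ X
            rw [SimpleGraph.Walk.getVert_zero]; exact hβ
          · show Zc.getVert Zc.length ∈ X
            rw [SimpleGraph.Walk.getVert_length]; exact hβ
      · obtain ⟨Xc, Yc, Zc, hXZ, hYZ, aXZ, aYZ, _, _⟩ := hall β γ α
          (by ext t; simp only [Set.mem_insert_iff, Set.mem_singleton_iff]; tauto)
        refine ⟨Zc.length, (fun i => Xc.getVert i), (fun i => Yc.getVert i),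
          (fun i => Zc.getVert i), SimpleGraph.Walk.getVert_zero _, ?_,
          SimpleGraph.Walk.getVert_zero _, ?_, SimpleGraph.Walk.getVert_zero _,
          SimpleGraph.Walk.getVert_length _, ?_, ?_, ?_, ?_, ?_, ?_⟩
        · rw [← hXZ]; exact SimpleGraph.Walk.getVert_length _
        · rw [← hYZ]; exact SimpleGraph.Walk.getVert_length _
        · intro i hi; exact Xc.adj_getVert_succ (by omega)
        · intro i hi; exact Yc.adj_getVert_succ (by omega)
        · intro i hi; exact Zc.adj_getVert_succ hi
        · intro i hi; exact aXZ.2 i (by omega)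
        · intro i hi; exact aYZ.2 i (by omega)
        · refine walk_parity hbip (fun i => Zc.getVert i) Zc.length
            (fun i hi => Zc.adj_getVert_succ hi) ?_ ?_
          · show Zc.getVert 0 ∈ X
            rw [SimpleGraph.Walk.getVert_zero]; exact hβ
          · show Zc.getVert Zc.length ∈ X
            rw [SimpleGraph.Walk.getVert_length]; exact hα
  exact gadget_main H α β γ α' β' hab hag hbg haa' hbb' nab' nba' hTT.1 hTT.2
    ℓ2 p' q' hp'0 hp'l hq'0 hq'l ap' aq' av2 hl2e g
end

section
/- Let H be a bipartite graph whose complement is not a circular-arc graph, let (α,β,γ) be a structural triple of H, and let g ∈ ℕ. Then there exists a path P of length at least g with H-lists L and endvertices c and y with L(c) = {α,β} and L(y) = {α,β,γ}, such that: (P1) for every a ∈ {α,β} and every b ∈ {α,β} there exists a list homomorphism φ : (P,L) → H with φ(c) = a and φ(y) = b; (P2) there exists a list homomorphism φ : (P,L) → H with φ(c) = α and φ(y) = γ; (P3) there is no list homomorphism φ : (P,L) → H with φ(c) = β and φ(y) = γ. -/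
open SimpleGraph

namespace PG

variable {W : Type} {H : SimpleGraph W}

/-- A valid list assignment on a path 0..n indexed by ℕ. -/
def Ok (H : SimpleGraph W) (L : ℕ → Set W) (n : ℕ) (φ : ℕ → W) : Prop :=
  (∀ i, i ≤ n → φ i ∈ L i) ∧ ∀ i, i < n → H.Adj (φ i) (φ (i + 1))

def Rl (H : SimpleGraph W) (L : ℕ → Set W) (n : ℕ) (a b : W) : Prop :=
  ∃ φ, Ok H L n φ ∧ φ 0 = a ∧ φ n = b

theorem rl_congr {L L' : ℕ → Set W} {n a b} (h : ∀ i, i ≤ n → L i = L' i) :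
    Rl H L n a b → Rl H L' n a b := by
  rintro ⟨φ, ⟨hm, he⟩, h0, hn⟩
  exact ⟨φ, ⟨fun i hi => (h i hi) ▸ hm i hi, he⟩, h0, hn⟩

theorem rl_start {L : ℕ → Set W} {n a b} (h : Rl H L n a b) : a ∈ L 0 := by
  obtain ⟨φ, ⟨hm, _⟩, h0, _⟩ := h
  exact h0 ▸ hm 0 (by omega)

def revL (L : ℕ → Set W) (n : ℕ) : ℕ → Set W := fun i => L (n - i)

theorem rl_rev {L : ℕ → Set W} {n a b} (h : Rl H L n a b) : Rl H (revL L n) n b a := by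
  obtain ⟨φ, ⟨hm, he⟩, h0, hn⟩ := h
  refine ⟨fun i => φ (n - i), ⟨fun i hi => hm _ (by omega), fun i hi => ?_⟩, by simpa, by simpa⟩
  show H.Adj (φ (n - i)) (φ (n - (i + 1)))
  have h2 := he (n - (i + 1)) (by omega)
  have e : n - (i + 1) + 1 = n - i := by omega
  rw [e] at h2
  exact h2.symm

theorem rl_rev_iff {L : ℕ → Set W} {n a b} : Rl H (revL L n) n b a ↔ Rl H L n a b := by
  constructor
  · intro h
    refine rl_congr (fun i hi => ?_) (rl_rev h)
    have e : n - (n - i) = i := by omega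
    show L (n - (n - i)) = L i
    rw [e]
  · exact rl_rev

def catL (L : ℕ → Set W) (n : ℕ) (M : ℕ → Set W) : ℕ → Set W :=
  fun i => if i ≤ n then L i else M (i - n)

theorem rl_cat {L M : ℕ → Set W} {n m a b} (hc : L n = M 0) :
    Rl H (catL L n M) (n + m) a b ↔ ∃ v, Rl H L n a v ∧ Rl H M m v b := by
  constructor
  · rintro ⟨φ, ⟨hm, he⟩, h0, hn⟩
    refine ⟨φ n, ⟨φ, ⟨fun i hi => ?_, fun i hi => he i (by omega)⟩, h0, rfl⟩,
      ⟨fun j => φ (n + j), ⟨fun j hj => ?_, fun j hj => ?_⟩, rfl, hn⟩⟩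
    · have h2 := hm i (by omega); rwa [catL, if_pos hi] at h2
    · show φ (n + j) ∈ M j
      rcases Nat.eq_zero_or_pos j with rfl | hj0
      · have h2 := hm n (by omega); rw [catL, if_pos le_rfl, hc] at h2; simpa using h2
      · have h2 := hm (n + j) (by omega)
        rwa [catL, if_neg (by omega), Nat.add_sub_cancel_left] at h2
    · show H.Adj (φ (n + j)) (φ (n + (j + 1)))
      have h2 := he (n + j) (by omega); rwa [Nat.add_assoc] at h2
  · rintro ⟨v, ⟨φ₁, ⟨hm1, he1⟩, h10, h1n⟩, ⟨φ₂, ⟨hm2, he2⟩, h20, h2n⟩⟩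
    refine ⟨fun i => if i ≤ n then φ₁ i else φ₂ (i - n), ⟨fun i hi => ?_, fun i hi => ?_⟩, ?_, ?_⟩
    · show (if i ≤ n then φ₁ i else φ₂ (i - n)) ∈ catL L n M i
      by_cases h : i ≤ n
      · rw [if_pos h, catL, if_pos h]; exact hm1 i h
      · rw [if_neg h, catL, if_neg h]; exact hm2 _ (by omega)
    · show H.Adj (if i ≤ n then φ₁ i else φ₂ (i - n))
        (if i + 1 ≤ n then φ₁ (i + 1) else φ₂ (i + 1 - n))
      rcases lt_trichotomy i n with h | rfl | h
      · rw [if_pos (by omega), if_pos (by omega)]; exact he1 i h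
      · have hm0 : 0 < m := by omega
        rw [if_pos le_rfl, if_neg (by omega), Nat.add_sub_cancel_left, h1n, ← h20]
        exact he2 0 hm0
      · rw [if_neg (by omega), if_neg (by omega)]
        have e : i + 1 - n = (i - n) + 1 := by omega
        rw [e]
        exact he2 (i - n) (by omega)
    · show (if 0 ≤ n then φ₁ 0 else φ₂ (0 - n)) = a
      rw [if_pos (by omega)]; exact h10
    · show (if n + m ≤ n then φ₁ (n + m) else φ₂ (n + m - n)) = b
      by_cases h : m = 0
      · subst h
        rw [if_pos (by omega), Nat.add_zero, h1n]
        exact h20.symm.trans h2n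
      · rw [if_neg (by omega), Nat.add_sub_cancel_left]; exact h2n

/-- Conversion to the `Fin`/`pathGraph` formulation. -/
theorem toFin (H : SimpleGraph W) (L : ℕ → Set W) (n : ℕ) (a b : W) :
    (∃ φ, ListHomRel (SimpleGraph.pathGraph (n + 1)) H.Adj (fun i : Fin (n + 1) => L i.val) φ ∧
      φ 0 = a ∧ φ (Fin.last n) = b) ↔ Rl H L n a b := by
  constructor
  · rintro ⟨φ, ⟨hm, he⟩, h0, hn⟩
    refine ⟨fun i => φ ⟨min i n, by omega⟩, ⟨fun i hi => ?_, fun i hi => ?_⟩, ?_, ?_⟩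
    · have h2 := hm ⟨min i n, by omega⟩
      simpa [Nat.min_eq_left hi] using h2
    · show H.Adj (φ ⟨min i n, by omega⟩) (φ ⟨min (i + 1) n, by omega⟩)
      refine he ?_
      rw [SimpleGraph.pathGraph_adj]
      left
      show min i n + 1 = min (i + 1) n
      omega
    · show φ ⟨min 0 n, by omega⟩ = a
      have e : (⟨min 0 n, by omega⟩ : Fin (n + 1)) = 0 := by
        apply Fin.ext; simp
      rw [e]; exact h0
    · show φ ⟨min n n, by omega⟩ = b
      have e : (⟨min n n, by omega⟩ : Fin (n + 1)) = Fin.last n := by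
        apply Fin.ext; simp [Fin.last]
      rw [e]; exact hn
  · rintro ⟨φ, ⟨hm, he⟩, h0, hn⟩
    refine ⟨fun i => φ i.val, ⟨fun i => hm i.val (by omega), fun u v huv => ?_⟩, h0, by
      simpa [Fin.last] using hn⟩
    rw [SimpleGraph.pathGraph_adj] at huv
    show H.Adj (φ u.val) (φ v.val)
    rcases huv with h | h
    · have h2 := he u.val (by omega); rwa [h] at h2
    · have h2 := he v.val (by omega); rw [h] at h2; exact h2.symm

/-! ### Padding -/

section Pad

variable {A B A' B' : W}

def pad (A B A' B' : W) (L : ℕ → Set W) : ℕ → Set W :=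
  fun i => if i = 0 then {A, B} else if i = 1 then {A', B'} else L (i - 2)

def npad (A B A' B' : W) : ℕ → (ℕ → Set W) → (ℕ → Set W)
  | 0, L => L
  | (k + 1), L => pad A B A' B' (npad A B A' B' k L)

theorem npad_top {L : ℕ → Set W} (k i : ℕ) : npad A B A' B' k L (2 * k + i) = L i := by
  induction k with
  | zero => simp [npad]
  | succ k ih =>
    have e : 2 * (k + 1) + i = (2 * k + i) + 2 := by omega
    rw [e, npad, pad]
    rw [if_neg (by omega), if_neg (by omega)]
    simpa using ih

theorem rl_pad {L : ℕ → Set W} {n : ℕ} (hAB : A ≠ B)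
    (hA : H.Adj A A') (hB : H.Adj B B') (hAB' : ¬ H.Adj A B') (hBA' : ¬ H.Adj B A')
    (hL0 : L 0 = {A, B}) {s t : W} :
    Rl H (pad A B A' B' L) (n + 2) s t ↔ s ∈ ({A, B} : Set W) ∧ Rl H L n s t := by
  constructor
  · rintro ⟨φ, ⟨hm, he⟩, h0, hn⟩
    have hs : s ∈ ({A, B} : Set W) := by
      have h2 := hm 0 (by omega)
      rw [h0, pad, if_pos rfl] at h2; exact h2
    have h1 : φ 1 ∈ ({A', B'} : Set W) := by
      have h2 := hm 1 (by omega)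
      rwa [pad, if_neg one_ne_zero, if_pos rfl] at h2
    have h2 : φ 2 ∈ ({A, B} : Set W) := by
      have h2 := hm 2 (by omega)
      rwa [pad, if_neg (by omega), if_neg (by omega), show (2:ℕ) - 2 = 0 from rfl, hL0] at h2
    have e0 : H.Adj s (φ 1) := h0 ▸ he 0 (by omega)
    have e1 : H.Adj (φ 1) (φ 2) := he 1 (by omega)
    have h2s : φ 2 = s := by
      rcases hs with rfl | rfl
      · rcases h1 with h1 | h1
        · rw [h1] at e1
          rcases h2 with h2 | h2
          · exact h2
          · rw [h2] at e1
            exact absurd e1.symm hBA'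
        · rw [h1] at e0; exact absurd e0 hAB'
      · rcases h1 with h1 | h1
        · rw [h1] at e0; exact absurd e0 hBA'
        · rw [h1] at e1
          rcases h2 with h2 | h2
          · rw [h2] at e1; exact absurd e1.symm hAB'
          · exact h2
    refine ⟨hs, fun i => φ (i + 2), ⟨fun i hi => ?_, fun i hi => he (i + 2) (by omega)⟩,
      h2s, hn⟩
    · show φ (i + 2) ∈ L i
      have h3 := hm (i + 2) (by omega)
      rwa [pad, if_neg (by omega), if_neg (by omega), Nat.add_sub_cancel] at h3
  · rintro ⟨hs, φ, ⟨hm, he⟩, h0, hn⟩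
    classical
    refine ⟨fun i => if i = 0 then s else if i = 1 then (if s = A then A' else B') else φ (i - 2),
      ⟨fun i hi => ?_, fun i hi => ?_⟩, by simp, ?_⟩
    · show (if i = 0 then s else if i = 1 then (if s = A then A' else B') else φ (i - 2))
        ∈ pad A B A' B' L i
      by_cases h0' : i = 0
      · subst h0'; rw [if_pos rfl, pad, if_pos rfl]; exact hs
      · by_cases h1' : i = 1
        · subst h1'; rw [if_neg one_ne_zero, if_pos rfl, pad, if_neg one_ne_zero, if_pos rfl]
          by_cases hsA : s = A <;> simp [hsA]
        · rw [if_neg h0', if_neg h1', pad, if_neg h0', if_neg h1']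
          exact hm (i - 2) (by omega)
    · show H.Adj (if i = 0 then s else if i = 1 then (if s = A then A' else B') else φ (i - 2))
        (if i + 1 = 0 then s else if i + 1 = 1 then (if s = A then A' else B') else φ (i + 1 - 2))
      by_cases h0' : i = 0
      · subst h0'
        norm_num
        rcases hs with rfl | rfl
        · rw [if_pos rfl]; exact hA
        · rw [if_neg (Ne.symm hAB)]; exact hB
      · by_cases h1' : i = 1
        · subst h1'
          norm_num
          rw [h0]
          rcases hs with rfl | rfl
          · rw [if_pos rfl]; exact hA.symm
          · rw [if_neg (Ne.symm hAB)]; exact hB.symm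
        · rw [if_neg h0', if_neg h1', if_neg (by omega), if_neg (by omega)]
          have e : i + 1 - 2 = (i - 2) + 1 := by omega
          rw [e]
          exact he (i - 2) (by omega)
    · show (if n + 2 = 0 then s else if n + 2 = 1 then (if s = A then A' else B') else φ (n + 2 - 2)) = t
      rw [if_neg (by omega), if_neg (by omega), Nat.add_sub_cancel]; exact hn

theorem rl_npad {L : ℕ → Set W} {n : ℕ} (hAB : A ≠ B)
    (hA : H.Adj A A') (hB : H.Adj B B') (hAB' : ¬ H.Adj A B') (hBA' : ¬ H.Adj B A')
    (hL0 : L 0 = {A, B}) (k : ℕ) {s t : W} :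
    Rl H (npad A B A' B' k L) (2 * k + n) s t ↔ s ∈ ({A, B} : Set W) ∧ Rl H L n s t := by
  induction k with
  | zero =>
    simp only [npad, Nat.mul_zero, Nat.zero_add]
    exact ⟨fun h => ⟨hL0 ▸ rl_start h, h⟩, fun h => h.2⟩
  | succ k ih =>
    have h0' : npad A B A' B' k L 0 = {A, B} := by
      cases k with
      | zero => exact hL0
      | succ k => simp [npad, pad]
    have e : 2 * (k + 1) + n = (2 * k + n) + 2 := by omega
    rw [e, npad, rl_pad hAB hA hB hAB' hBA' h0', ih]
    tauto

end Pad

/-! ### Walk gadgets -/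

section Gadget

variable {x0 x1 y0 y1 z0 z1 : W} {X : H.Walk x0 x1} {Y : H.Walk y0 y1} {Z : H.Walk z0 z1}

def gl (X : H.Walk x0 x1) (Y : H.Walk y0 y1) (Z : H.Walk z0 z1) : ℕ → Set W :=
  fun i => {X.getVert i, Y.getVert i, Z.getVert i}

theorem rl_gl_X (hx : X.length = Z.length) :
    Rl H (gl X Y Z) Z.length x0 x1 := by
  refine ⟨X.getVert, ⟨fun i _ => by simp [gl], fun i hi => X.adj_getVert_succ (by omega)⟩,
    X.getVert_zero, by rw [← hx]; exact X.getVert_length⟩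

theorem rl_gl_Y (hy : Y.length = Z.length) :
    Rl H (gl X Y Z) Z.length y0 y1 := by
  refine ⟨Y.getVert, ⟨fun i _ => by simp [gl], fun i hi => Y.adj_getVert_succ (by omega)⟩,
    Y.getVert_zero, by rw [← hy]; exact Y.getVert_length⟩

theorem rl_gl_Z : Rl H (gl X Y Z) Z.length z0 z1 :=
  ⟨Z.getVert, ⟨fun i _ => by simp [gl], fun i hi => Z.adj_getVert_succ (by omega)⟩,
    Z.getVert_zero, Z.getVert_length⟩

theorem force_Z (hzx : Avoids H Z X) (hzy : Avoids H Z Y) {φ : ℕ → W}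
    (hφ : Ok H (gl X Y Z) Z.length φ) (h0 : φ 0 = z0) :
    ∀ i, i ≤ Z.length → φ i = Z.getVert i := by
  intro i
  induction i with
  | zero => intro _; rw [h0, Z.getVert_zero]
  | succ i ih =>
    intro hi
    have hprev := ih (by omega)
    have hadj : H.Adj (Z.getVert i) (φ (i + 1)) := by
      have h2 := hφ.2 i (by omega); rwa [hprev] at h2
    rcases hφ.1 (i + 1) hi with h | h | h
    · exact absurd (h ▸ hadj) (hzx.2 i (by omega))
    · exact absurd (h ▸ hadj) (hzy.2 i (by omega))
    · exact h

theorem force_XY (hx : X.length = Z.length) (hy : Y.length = Z.length)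
    (hxz : Avoids H X Z) (hyz : Avoids H Y Z) {φ : ℕ → W}
    (hφ : Ok H (gl X Y Z) Z.length φ) (h0 : φ 0 = x0) :
    ∀ i, i ≤ Z.length → φ i = X.getVert i ∨ φ i = Y.getVert i := by
  intro i
  induction i with
  | zero => intro _; left; rw [h0, X.getVert_zero]
  | succ i ih =>
    intro hi
    have hprev := ih (by omega)
    have hnadj : ¬ H.Adj (φ i) (Z.getVert (i + 1)) := by
      rcases hprev with h | h
      · rw [h]; exact hxz.2 i (by rw [hx]; omega)
      · rw [h]; exact hyz.2 i (by rw [hy]; omega)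
    have hadj := hφ.2 i (by omega)
    rcases hφ.1 (i + 1) hi with h | h | h
    · exact Or.inl h
    · exact Or.inr h
    · exact absurd (h ▸ hadj) hnadj

end Gadget

theorem incomp_ne {u v : W} (h : IncompPair H u v) : u ≠ v := by
  rintro rfl; exact h.1 le_rfl

end PG

namespace PG

variable {W : Type} {H : SimpleGraph W}

theorem rl2 {L : ℕ → Set W} {u0 u1 u2 : W}
    (h0 : u0 ∈ L 0) (h1 : u1 ∈ L 1) (h2 : u2 ∈ L 2)
    (e0 : H.Adj u0 u1) (e1 : H.Adj u1 u2) : Rl H L 2 u0 u2 := by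
  classical
  refine ⟨fun i => if i = 0 then u0 else if i = 1 then u1 else u2, ⟨?_, ?_⟩,
    by norm_num, by norm_num⟩
  · intro i hi
    have hc : i = 0 ∨ i = 1 ∨ i = 2 := by omega
    rcases hc with rfl | rfl | rfl
    · simpa using h0
    · simpa using h1
    · simpa using h2
  · intro i hi
    have hc : i = 0 ∨ i = 1 := by omega
    rcases hc with rfl | rfl
    · simpa using e0
    · simpa using e1

theorem rl4 {L : ℕ → Set W} {u0 u1 u2 u3 u4 : W}
    (h0 : u0 ∈ L 0) (h1 : u1 ∈ L 1) (h2 : u2 ∈ L 2) (h3 : u3 ∈ L 3) (h4 : u4 ∈ L 4)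
    (e0 : H.Adj u0 u1) (e1 : H.Adj u1 u2) (e2 : H.Adj u2 u3) (e3 : H.Adj u3 u4) :
    Rl H L 4 u0 u4 := by
  classical
  refine ⟨fun i => if i = 0 then u0 else if i = 1 then u1 else if i = 2 then u2
      else if i = 3 then u3 else u4, ⟨?_, ?_⟩, by norm_num, by norm_num⟩
  · intro i hi
    have hc : i = 0 ∨ i = 1 ∨ i = 2 ∨ i = 3 ∨ i = 4 := by omega
    rcases hc with rfl | rfl | rfl | rfl | rfl
    · simpa using h0
    · simpa using h1
    · simpa using h2
    · simpa using h3
    · simpa using h4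
  · intro i hi
    have hc : i = 0 ∨ i = 1 ∨ i = 2 ∨ i = 3 := by omega
    rcases hc with rfl | rfl | rfl | rfl
    · simpa using e0
    · simpa using e1
    · simpa using e2
    · simpa using e3

theorem assemble {α β γ α' β' : W} (hab : α ≠ β)
    (hA : H.Adj α α') (hB : H.Adj β β') (hAB' : ¬ H.Adj α β') (hBA' : ¬ H.Adj β α')
    {C : ℕ → Set W} {n0 : ℕ} (hC0 : C 0 = {α, β}) (hCe : C n0 = {α, β, γ})
    (h11 : Rl H C n0 α α) (h12 : Rl H C n0 α β) (h21 : Rl H C n0 β α) (h22 : Rl H C n0 β β)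
    (hP2 : Rl H C n0 α γ) (hP3 : ¬ Rl H C n0 β γ) (g : ℕ) :
    ∃ (n : ℕ) (L : Fin (n + 1) → Set W),
      g ≤ n ∧
      L 0 = {α, β} ∧ L (Fin.last n) = {α, β, γ} ∧
      (∀ a ∈ ({α, β} : Set W), ∀ b ∈ ({α, β} : Set W),
        ∃ φ, ListHomRel (SimpleGraph.pathGraph (n + 1)) H.Adj L φ ∧
          φ 0 = a ∧ φ (Fin.last n) = b) ∧
      (∃ φ, ListHomRel (SimpleGraph.pathGraph (n + 1)) H.Adj L φ ∧
        φ 0 = α ∧ φ (Fin.last n) = γ) ∧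
      ¬ ∃ φ, ListHomRel (SimpleGraph.pathGraph (n + 1)) H.Adj L φ ∧
        φ 0 = β ∧ φ (Fin.last n) = γ := by
  refine ⟨2 * (g + 1) + n0, fun i => npad α β α' β' (g + 1) C i.val, by omega, ?_, ?_, ?_, ?_, ?_⟩
  · show npad α β α' β' (g + 1) C (0 : Fin _).val = {α, β}
    simp [npad, pad]
  · show npad α β α' β' (g + 1) C (Fin.last _).val = {α, β, γ}
    rw [Fin.val_last, npad_top, hCe]
  · intro a ha b hb
    rw [toFin, rl_npad hab hA hB hAB' hBA' hC0]
    refine ⟨ha, ?_⟩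
    simp only [Set.mem_insert_iff, Set.mem_singleton_iff] at ha hb
    rcases ha with rfl | rfl <;> rcases hb with rfl | rfl
    · exact h11
    · exact h12
    · exact h21
    · exact h22
  · rw [toFin, rl_npad hab hA hB hAB' hBA' hC0]
    exact ⟨Set.mem_insert _ _, hP2⟩
  · rw [toFin, rl_npad hab hA hB hAB' hBA' hC0]
    rintro ⟨-, h⟩
    exact hP3 h

end PG

/-- Let `H` be a bipartite graph (class `X`) whose complement is not a circular-arc
graph, `(α,β,γ)` a structural triple of `H` with `α,β,γ ∈ X`, and `g ∈ ℕ`.  Then there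
is a path `P` of length `n ≥ g` (here `pathGraph (n+1)`, with endvertices `c = 0` and
`y = Fin.last n`) with `H`-lists `L` such that `L c = {α,β}`, `L y = {α,β,γ}`, and:
(P1) for all `a, b ∈ {α,β}` some list homomorphism maps `c` to `a` and `y` to `b`;
(P2) some list homomorphism maps `c` to `α` and `y` to `γ`;
(P3) no list homomorphism maps `c` to `β` and `y` to `γ`. -/
theorem path_gadget {W : Type} [Fintype W] (H : SimpleGraph W) (X : Set W)
    (hbip : BipClass H X) (hnca : ¬ IsCircularArcGraph Hᶜ)
    (α β γ : W) (hα : α ∈ X) (hβ : β ∈ X) (hγ : γ ∈ X)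
    (htriple : StructTriple H α β γ) (g : ℕ) :
    ∃ (n : ℕ) (L : Fin (n + 1) → Set W),
      g ≤ n ∧
      L 0 = {α, β} ∧ L (Fin.last n) = {α, β, γ} ∧
      (∀ a ∈ ({α, β} : Set W), ∀ b ∈ ({α, β} : Set W),
        ∃ φ, ListHomRel (SimpleGraph.pathGraph (n + 1)) H.Adj L φ ∧
          φ 0 = a ∧ φ (Fin.last n) = b) ∧
      (∃ φ, ListHomRel (SimpleGraph.pathGraph (n + 1)) H.Adj L φ ∧
        φ 0 = α ∧ φ (Fin.last n) = γ) ∧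
      ¬ ∃ φ, ListHomRel (SimpleGraph.pathGraph (n + 1)) H.Adj L φ ∧
        φ 0 = β ∧ φ (Fin.last n) = γ := by
  classical
  obtain ⟨⟨α', β', hAA', hBB', hab, -, -, -, hAB', hBA'⟩, ⟨hiab, hiag, hibg⟩, -, h4⟩ := htriple
  have hag : α ≠ γ := PG.incomp_ne hiag
  have hbg : β ≠ γ := PG.incomp_ne hibg
  rcases h4 with ⟨w, hcyc, hα0, hβ4, hγ2⟩ | ⟨w, hcyc, hα0, hβ4, hγ2⟩ | ⟨-, hperm⟩
  · -- induced C6 case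
    subst hα0; subst hβ4; subst hγ2
    have adjw : ∀ i j : Fin 6, ((j:ℕ) = ((i:ℕ)+1) % 6 ∨ (i:ℕ) = ((j:ℕ)+1) % 6) → H.Adj (w i) (w j) :=
      fun i j h => (hcyc.2 i j).2 h
    have nadjw : ∀ i j : Fin 6, ¬ ((j:ℕ) = ((i:ℕ)+1) % 6 ∨ (i:ℕ) = ((j:ℕ)+1) % 6) → ¬ H.Adj (w i) (w j) :=
      fun i j h hadj => h ((hcyc.2 i j).1 hadj)
    refine PG.assemble (C := fun i : ℕ => if i = 0 then ({w 0, w 4} : Set W)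
        else if i = 1 then {w 5, w 1} else {w 0, w 4, w 2}) (n0 := 2)
      hab hAA' hBB' hAB' hBA' (by norm_num) (by norm_num) ?_ ?_ ?_ ?_ ?_ ?_ g
    · exact PG.rl2 (by simp) (by simp) (by simp)
        (adjw 0 1 (by decide)) (adjw 1 0 (by decide))
    · exact PG.rl2 (by simp) (by simp) (by simp)
        (adjw 0 5 (by decide)) (adjw 5 4 (by decide))
    · exact PG.rl2 (by simp) (by simp) (by simp)
        (adjw 4 5 (by decide)) (adjw 5 0 (by decide))
    · exact PG.rl2 (by simp) (by simp) (by simp)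
        (adjw 4 5 (by decide)) (adjw 5 4 (by decide))
    · exact PG.rl2 (by simp) (by simp) (by simp)
        (adjw 0 1 (by decide)) (adjw 1 2 (by decide))
    · rintro ⟨φ, ⟨hm, he⟩, h0, h2⟩
      have m1 := hm 1 (by omega)
      norm_num at m1
      have e0 := he 0 (by omega)
      rw [h0] at e0
      have e1 := he 1 (by omega)
      rw [h2] at e1
      rcases m1 with h | h
      · rw [h] at e1; exact nadjw 5 2 (by decide) e1
      · rw [h] at e0; exact nadjw 4 1 (by decide) e0
  · -- induced C8 case
    subst hα0; subst hβ4; subst hγ2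
    have adjw : ∀ i j : Fin 8, ((j:ℕ) = ((i:ℕ)+1) % 8 ∨ (i:ℕ) = ((j:ℕ)+1) % 8) → H.Adj (w i) (w j) :=
      fun i j h => (hcyc.2 i j).2 h
    have nadjw : ∀ i j : Fin 8, ¬ ((j:ℕ) = ((i:ℕ)+1) % 8 ∨ (i:ℕ) = ((j:ℕ)+1) % 8) → ¬ H.Adj (w i) (w j) :=
      fun i j h hadj => h ((hcyc.2 i j).1 hadj)
    refine PG.assemble (C := fun i : ℕ => if i = 0 then ({w 0, w 4} : Set W)
        else if i = 1 then {w 1, w 5} else if i = 2 then {w 0, w 2, w 6}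
        else if i = 3 then {w 3, w 5, w 7} else {w 0, w 4, w 2}) (n0 := 4)
      hab hAA' hBB' hAB' hBA' (by norm_num) (by norm_num) ?_ ?_ ?_ ?_ ?_ ?_ g
    · exact PG.rl4 (by simp) (by simp) (by simp) (by simp) (by simp)
        (adjw 0 1 (by decide)) (adjw 1 0 (by decide)) (adjw 0 7 (by decide)) (adjw 7 0 (by decide))
    · exact PG.rl4 (by simp) (by simp) (by simp) (by simp) (by simp)
        (adjw 0 1 (by decide)) (adjw 1 2 (by decide)) (adjw 2 3 (by decide)) (adjw 3 4 (by decide))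
    · exact PG.rl4 (by simp) (by simp) (by simp) (by simp) (by simp)
        (adjw 4 5 (by decide)) (adjw 5 6 (by decide)) (adjw 6 7 (by decide)) (adjw 7 0 (by decide))
    · exact PG.rl4 (by simp) (by simp) (by simp) (by simp) (by simp)
        (adjw 4 5 (by decide)) (adjw 5 6 (by decide)) (adjw 6 5 (by decide)) (adjw 5 4 (by decide))
    · exact PG.rl4 (by simp) (by simp) (by simp) (by simp) (by simp)
        (adjw 0 1 (by decide)) (adjw 1 2 (by decide)) (adjw 2 3 (by decide)) (adjw 3 2 (by decide))
    · rintro ⟨φ, ⟨hm, he⟩, h0, h4⟩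
      have m1 := hm 1 (by omega)
      have m2 := hm 2 (by omega)
      have m3 := hm 3 (by omega)
      norm_num at m1 m2 m3
      have e0 := he 0 (by omega)
      rw [h0] at e0
      have e1 := he 1 (by omega)
      have e2 := he 2 (by omega)
      have e3 := he 3 (by omega)
      rw [h4] at e3
      have hp1 : φ 1 = w 5 := by
        rcases m1 with h | h
        · rw [h] at e0; exact absurd e0 (nadjw 4 1 (by decide))
        · exact h
      rw [hp1] at e1
      have hp2 : φ 2 = w 6 := by
        rcases m2 with h | h | h
        · rw [h] at e1; exact absurd e1 (nadjw 5 0 (by decide))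
        · rw [h] at e1; exact absurd e1 (nadjw 5 2 (by decide))
        · exact h
      rw [hp2] at e2
      rcases m3 with h | h | h
      · rw [h] at e2; exact nadjw 6 3 (by decide) e2
      · rw [h] at e3; exact nadjw 5 2 (by decide) e3
      · rw [h] at e3; exact nadjw 7 2 (by decide) e3
  · -- strongly incomparable case, via avoiding walks
    obtain ⟨X1, Y1, Z1, hx1, hy1, hxz1, hyz1, hzx1, hzy1⟩ := hperm α β γ rfl
    obtain ⟨X2, Y2, Z2, hx2, hy2, hxz2, hyz2, hzx2, hzy2⟩ := hperm α γ β
      (by ext x; simp; tauto)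
    set n1 := Z1.length with hn1def
    set n2 := Z2.length with hn2def
    have hn1 : 1 ≤ n1 := by
      rcases Nat.eq_zero_or_pos n1 with h | h
      · exact absurd (SimpleGraph.Walk.eq_of_length_eq_zero (h : Z1.length = 0)) hbg
      · exact h
    have hn2 : 1 ≤ n2 := by
      rcases Nat.eq_zero_or_pos n2 with h | h
      · exact absurd (SimpleGraph.Walk.eq_of_length_eq_zero (hy2.trans h)) hag
      · exact h
    set G1 := PG.gl X1 Y1 Z1 with hG1def
    set G2 := PG.gl X2 Y2 Z2 with hG2def
    -- endpoint values of the walks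
    have eX1 : X1.getVert n1 = α := by rw [← hx1]; exact X1.getVert_length
    have eY1 : Y1.getVert n1 = β := by rw [← hy1]; exact Y1.getVert_length
    have eZ1 : Z1.getVert n1 = γ := Z1.getVert_length
    have eX2 : X2.getVert n2 = α := by rw [← hx2]; exact X2.getVert_length
    have eY2 : Y2.getVert n2 = γ := by rw [← hy2]; exact Y2.getVert_length
    have eZ2 : Z2.getVert n2 = β := Z2.getVert_length
    have hG1_0 : G1 0 = ({α, β} : Set W) := by
      show ({X1.getVert 0, Y1.getVert 0, Z1.getVert 0} : Set W) = {α, β}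
      rw [X1.getVert_zero, Y1.getVert_zero, Z1.getVert_zero, Set.insert_idem]
    have hG1_n1 : G1 n1 = ({α, β, γ} : Set W) := by
      show ({X1.getVert n1, Y1.getVert n1, Z1.getVert n1} : Set W) = {α, β, γ}
      rw [eX1, eY1, eZ1]
    have hG2_0 : G2 0 = ({α, β} : Set W) := by
      show ({X2.getVert 0, Y2.getVert 0, Z2.getVert 0} : Set W) = {α, β}
      rw [X2.getVert_zero, Y2.getVert_zero, Z2.getVert_zero, Set.insert_idem]
    have hG2_n2 : G2 n2 = ({α, γ, β} : Set W) := by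
      show ({X2.getVert n2, Y2.getVert n2, Z2.getVert n2} : Set W) = {α, γ, β}
      rw [eX2, eY2, eZ2]
    -- realizations
    have r1X : PG.Rl H G1 n1 α α := PG.rl_gl_X hx1
    have r1Y : PG.Rl H G1 n1 α β := PG.rl_gl_Y hy1
    have r1Z : PG.Rl H G1 n1 β γ := PG.rl_gl_Z
    have r2X : PG.Rl H G2 n2 α α := PG.rl_gl_X hx2
    have r2Y : PG.Rl H G2 n2 α γ := PG.rl_gl_Y hy2
    have r2Z : PG.Rl H G2 n2 β β := PG.rl_gl_Z
    -- forcings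
    have f1β : ∀ t, PG.Rl H G1 n1 β t → t = γ := by
      rintro t ⟨φ, hφ, h0, hn⟩
      have h := PG.force_Z hzx1 hzy1 hφ h0 n1 le_rfl
      rw [hn, eZ1] at h
      exact h
    have f1α : ∀ t, PG.Rl H G1 n1 α t → t = α ∨ t = β := by
      rintro t ⟨φ, hφ, h0, hn⟩
      have h := PG.force_XY hx1 hy1 hxz1 hyz1 hφ h0 n1 le_rfl
      rw [hn, eX1, eY1] at h
      exact h
    have f2β : ∀ t, PG.Rl H G2 n2 β t → t = β := by
      rintro t ⟨φ, hφ, h0, hn⟩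
      have h := PG.force_Z hzx2 hzy2 hφ h0 n2 le_rfl
      rw [hn, eZ2] at h
      exact h
    have f2α : ∀ t, PG.Rl H G2 n2 α t → t = α ∨ t = γ := by
      rintro t ⟨φ, hφ, h0, hn⟩
      have h := PG.force_XY hx2 hy2 hxz2 hyz2 hφ h0 n2 le_rfl
      rw [hn, eX2, eY2] at h
      exact h
    -- concatenation junctions
    have hj1 : G1 n1 = PG.revL G2 n2 0 := by
      show G1 n1 = G2 (n2 - 0)
      rw [Nat.sub_zero, hG1_n1, hG2_n2]
      ext x; simp; tauto
    have hj2 : PG.catL G1 n1 (PG.revL G2 n2) (n1 + n2) = G1 0 := by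
      rw [PG.catL]
      rw [if_neg (by omega)]
      show G2 (n2 - (n1 + n2 - n1)) = G1 0
      rw [show n2 - (n1 + n2 - n1) = 0 by omega, hG2_0, hG1_0]
    set C := PG.catL (PG.catL G1 n1 (PG.revL G2 n2)) (n1 + n2) G1 with hCdef
    have key : ∀ s t, PG.Rl H C ((n1 + n2) + n1) s t ↔
        ∃ v w, PG.Rl H G1 n1 s w ∧ PG.Rl H G2 n2 v w ∧ PG.Rl H G1 n1 v t := by
      intro s t
      rw [hCdef, PG.rl_cat hj2]
      constructor
      · rintro ⟨v, h1, h2⟩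
        rw [PG.rl_cat hj1] at h1
        obtain ⟨u, hw1, hw2⟩ := h1
        exact ⟨v, u, hw1, PG.rl_rev_iff.1 hw2, h2⟩
      · rintro ⟨v, u, hw1, hw2, h2⟩
        exact ⟨v, (PG.rl_cat hj1).2 ⟨u, hw1, PG.rl_rev_iff.2 hw2⟩, h2⟩
    have hC0 : C 0 = ({α, β} : Set W) := by
      rw [hCdef, PG.catL, if_pos (by omega), PG.catL, if_pos (by omega), hG1_0]
    have hCe : C ((n1 + n2) + n1) = ({α, β, γ} : Set W) := by
      rw [hCdef, PG.catL, if_neg (by omega), show n1 + n2 + n1 - (n1 + n2) = n1 by omega, hG1_n1]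
    refine PG.assemble hab hAA' hBB' hAB' hBA' hC0 hCe ?_ ?_ ?_ ?_ ?_ ?_ g
    · exact (key α α).2 ⟨α, α, r1X, r2X, r1X⟩
    · exact (key α β).2 ⟨α, α, r1X, r2X, r1Y⟩
    · exact (key β α).2 ⟨α, γ, r1Z, r2Y, r1X⟩
    · exact (key β β).2 ⟨α, γ, r1Z, r2Y, r1Y⟩
    · exact (key α γ).2 ⟨β, β, r1Y, r2Z, r1Z⟩
    · intro h
      rw [key β γ] at h
      obtain ⟨v, u, hw1, hw2, h2⟩ := h
      have hu : u = γ := f1β u hw1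
      rw [hu] at hw2
      have hv : v = α ∨ v = β := by
        have hst := PG.rl_start hw2
        rw [hG2_0] at hst
        simpa using hst
      rcases hv with rfl | rfl
      · rcases f1α γ h2 with h | h
        · exact hag h.symm
        · exact hbg h.symm
      · exact hbg (f2β γ hw2).symm
end

section
/- Let I = (V,D,C) be an instance of the binary constraint satisfaction problem with primal graph P, let X,Y ⊆ V be disjoint, let E be the set of edges of P with one endpoint in X and the other in Y, and let K := K(I). Then for every set S ⊆ 𝕏 there exists a subset S' ⊆ S with |S'| ≤ (∏_{u∈X} (deg_E(u)+1))^K such that S' is an (X-Y)-representative of S. -/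
open Polynomial in
/-- A product of `card β` monic linear factors can be written with coefficients
indexed by `Fin (card β + 1)`. -/
lemma exists_coeffs {β : Type} [Fintype β] (r : β → ℚ) :
    ∃ a : Fin (Fintype.card β + 1) → ℚ,
      ∀ t : ℚ, (∑ k, a k * t ^ (k : ℕ)) = ∏ i, (t - r i) := by
  classical
  set p : Polynomial ℚ := ∏ i, (X - C (r i)) with hp
  have hdeg : p.natDegree < Fintype.card β + 1 := by
    have h := Polynomial.natDegree_prod_le (Finset.univ) (fun i => X - C (r i))
    rw [← hp] at h
    simp only [Polynomial.natDegree_X_sub_C] at h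
    simp at h ⊢
    omega
  refine ⟨fun k => p.coeff k, fun t => ?_⟩
  have h2 := Polynomial.eval_eq_sum_range' hdeg t
  rw [Fin.sum_univ_eq_sum_range (fun k => p.coeff k * t ^ k), ← h2]
  simp [hp, Polynomial.eval_prod]

/-- From any set `S` and map `Φ` into a finite-dimensional coordinate space we can
extract a subset `S'` of size at most the dimension whose image spans the image of `S`. -/
lemma exists_small_spanning {A : Type} {n : Type} [Fintype n] (S : Set A) (Φ : A → (n → ℚ)) :
    ∃ S' ⊆ S, S'.ncard ≤ Fintype.card n ∧
      ∀ x ∈ S, Φ x ∈ Submodule.span ℚ (Φ '' S') := by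
  classical
  obtain ⟨b, hbs, hspan, hli⟩ := exists_linearIndependent ℚ (Φ '' S)
  have hfin : b.Finite := hli.setFinite
  haveI := hfin.fintype
  have hcard : b.ncard ≤ Fintype.card n := by
    have h1 := hli.fintype_card_le_finrank
    rw [Set.ncard_eq_toFinset_card']
    simpa [Module.finrank_pi] using h1
  choose g hgS hgΦ using fun φ : b => (hbs φ.2 : _)
  refine ⟨Set.range g, ?_, ?_, ?_⟩
  · rintro x ⟨φ, rfl⟩; exact hgS φ
  · calc (Set.range g).ncard = Nat.card (Set.range g) := (Nat.card_coe_set_eq _).symm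
      _ ≤ Nat.card b := Finite.card_range_le g
      _ = b.ncard := Nat.card_coe_set_eq b
      _ ≤ Fintype.card n := hcard
  · intro x hx
    have hb : b ⊆ Φ '' Set.range g := by
      rintro φ hφ
      exact ⟨g ⟨φ, hφ⟩, ⟨⟨φ, hφ⟩, rfl⟩, hgΦ ⟨φ, hφ⟩⟩
    have hmem : Φ x ∈ Submodule.span ℚ (Φ '' S) := Submodule.subset_span ⟨x, hx, rfl⟩
    rw [← hspan] at hmem
    exact Submodule.span_mono hb hmem

/-- Representative sets for binary CSPs.  A BCSP instance is modelled by its primal graph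
`P` on the variable set `V`, domains `D v ⊆ ℕ₊`, and, for every edge `uv` of `P`, the
constraint `R u v ⊆ D u × D v` (stored symmetrically: `(a,b) ∈ R u v ↔ (b,a) ∈ R v u`).
`K` is the invariant `K(I)`: the maximum, over edges `uv` and `a ∈ D v`, of the number of
values `b ∈ D u` with `(b,a)` forbidden.  For disjoint variable sets `X, Y` and the set
`E` of edges between them, every set `S` of (domain-respecting) tuples on `X` has an
`(X-Y)`-representative subset `S'` of size at most `(∏_{u ∈ X} (deg_E(u)+1))^K`:
for every domain-respecting tuple `y` on `Y`, some `x ∈ S` together with `y` satisfies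
all constraints between `X` and `Y` iff some `x' ∈ S'` does. -/
theorem bcsp_representative_sets {V : Type} [Fintype V] [DecidableEq V]
    (P : SimpleGraph V) [DecidableRel P.Adj]
    (D : V → Finset ℕ) (hpos : ∀ v, ∀ a ∈ D v, 0 < a)
    (R : V → V → Finset (ℕ × ℕ))
    (hsym : ∀ u v a b, (a, b) ∈ R u v ↔ (b, a) ∈ R v u)
    (K : ℕ)
    (hK : K = Finset.univ.sup fun u : V => Finset.univ.sup fun v : V =>
      if P.Adj u v then (D v).sup fun a => ((D u).filter fun b => (b, a) ∉ R u v).card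
      else 0)
    (X Y : Finset V) (hXY : Disjoint X Y)
    (S : Set ({ u // u ∈ X } → ℕ)) (hS : ∀ x ∈ S, ∀ u : { u // u ∈ X }, x u ∈ D ↑u) :
    ∃ S' ⊆ S,
      S'.ncard ≤ (∏ u ∈ X.attach, ((Y.filter fun v => P.Adj ↑u v).card + 1)) ^ K ∧
      ∀ y : { v // v ∈ Y } → ℕ, (∀ v : { v // v ∈ Y }, y v ∈ D ↑v) →
        ((∃ x ∈ S, ∀ (u : { u // u ∈ X }) (v : { v // v ∈ Y }),
            P.Adj ↑u ↑v → (x u, y v) ∈ R ↑u ↑v) ↔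
         (∃ x ∈ S', ∀ (u : { u // u ∈ X }) (v : { v // v ∈ Y }),
            P.Adj ↑u ↑v → (x u, y v) ∈ R ↑u ↑v)) := by
  classical
  set N : {u // u ∈ X} → Finset V := fun u => Y.filter fun v => P.Adj ↑u v with hN
  set Φ : ({u // u ∈ X} → ℕ) →
      ((Fin K → ∀ u : {u // u ∈ X}, Fin (Fintype.card {v // v ∈ N u} + 1)) → ℚ) :=
    fun x f => ∏ j, ∏ u, (x u : ℚ) ^ ((f j u : ℕ)) with hΦ
  obtain ⟨S', hsub, hcard, hspan⟩ := exists_small_spanning S Φ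
  refine ⟨S', hsub, ?_, ?_⟩
  · refine le_trans hcard (le_of_eq ?_)
    simp only [Fintype.card_fun, Fintype.card_fin, Fintype.card_pi,
      Finset.univ_eq_attach, Fintype.card_coe]
    rfl
  · intro y hy
    constructor
    swap
    · rintro ⟨x, hxS', hxg⟩; exact ⟨x, hsub hxS', hxg⟩
    rintro ⟨x, hxS, hxg⟩
    -- local data for this `y`
    set F : ∀ u : {u // u ∈ X}, {v // v ∈ N u} → Finset ℕ :=
      fun u v => (D ↑u).filter fun b =>
        (b, y ⟨↑v, (Finset.mem_filter.mp v.2).1⟩) ∉ R ↑u ↑v with hF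
    have hFK : ∀ u v, (F u v).card ≤ K := by
      intro u v
      have hadj : P.Adj ↑u ↑v := (Finset.mem_filter.mp v.2).2
      have h1 : (F u v).card ≤ (D ↑v).sup fun a =>
          ((D ↑u).filter fun b => (b, a) ∉ R ↑u ↑v).card :=
        Finset.le_sup (f := fun a => ((D ↑u).filter fun b => (b, a) ∉ R ↑u ↑v).card)
          (hy ⟨↑v, (Finset.mem_filter.mp v.2).1⟩)
      rw [hK]
      have h2 := Finset.le_sup (f := fun w : V => if P.Adj ↑u w then (D w).sup fun a =>
        ((D ↑u).filter fun b => (b, a) ∉ R ↑u w).card else 0) (Finset.mem_univ (↑v : V))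
      simp only [hadj, if_true] at h2
      have h3 := Finset.le_sup (f := fun u' : V => Finset.univ.sup fun w : V =>
        if P.Adj u' w then (D w).sup fun a =>
          ((D u').filter fun b => (b, a) ∉ R u' w).card else 0) (Finset.mem_univ (↑u : V))
      exact le_trans h1 (le_trans h2 h3)
    set rt : ∀ u : {u // u ∈ X}, {v // v ∈ N u} → Fin K → ℕ :=
      fun u v j => ((F u v).sort (· ≤ ·)).getD j 0 with hrt
    -- the root characterisation
    have hroot : ∀ (u : {u // u ∈ X}) (v : {v // v ∈ N u}) (b : ℕ), b ∈ D ↑u →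
        ((∀ j : Fin K, b ≠ rt u v j) ↔
          (b, y ⟨↑v, (Finset.mem_filter.mp v.2).1⟩) ∈ R ↑u ↑v) := by
      intro u v b hb
      constructor
      · intro h
        by_contra hnot
        have hbF : b ∈ F u v := Finset.mem_filter.mpr ⟨hb, hnot⟩
        have hbl : b ∈ (F u v).sort (· ≤ ·) := (Finset.mem_sort _).mpr hbF
        obtain ⟨i, hi, hget⟩ := List.getElem_of_mem hbl
        have hiK : i < K := lt_of_lt_of_le (by rwa [Finset.length_sort] at hi) (hFK u v)
        refine h ⟨i, hiK⟩ ?_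
        simp only [hrt]
        rw [List.getD_eq_getElem _ _ hi]
        exact hget.symm
      · intro hR j hbe
        by_cases hj : (j : ℕ) < ((F u v).sort (· ≤ ·)).length
        · have hmem : rt u v j ∈ F u v := by
            rw [← Finset.mem_sort (· ≤ ·)]
            rw [hrt]; simp only []
            rw [List.getD_eq_getElem _ _ hj]
            exact List.getElem_mem hj
          rw [← hbe] at hmem
          exact (Finset.mem_filter.mp hmem).2 hR
        · have hz : rt u v j = 0 := by
            simp only [hrt]
            exact List.getD_eq_default _ _ (le_of_not_gt hj)
          rw [hz] at hbe
          have hb0 := hpos _ b hb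
          omega
    -- coefficients of the product polynomials
    choose a ha using fun (u : {u // u ∈ X}) (j : Fin K) =>
      exists_coeffs (fun v : {v // v ∈ N u} => (rt u v j : ℚ))
    set Cy : (Fin K → ∀ u : {u // u ∈ X}, Fin (Fintype.card {v // v ∈ N u} + 1)) → ℚ :=
      fun f => ∏ j, ∏ u, a u j (f j u) with hCy
    -- key algebraic identity
    have hsum : ∀ x' : {u // u ∈ X} → ℕ,
        (∑ f, Cy f * Φ x' f) =
          ∏ j : Fin K, ∏ u : {u // u ∈ X}, ∏ v : {v // v ∈ N u},
            ((x' u : ℚ) - (rt u v j : ℚ)) := by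
      intro x'
      have step1 : ∀ j : Fin K,
          (∑ e : ∀ u : {u // u ∈ X}, Fin (Fintype.card {v // v ∈ N u} + 1),
            ∏ u, (a u j (e u) * (x' u : ℚ) ^ ((e u : ℕ)))) =
          ∏ u, ∏ v : {v // v ∈ N u}, ((x' u : ℚ) - (rt u v j : ℚ)) := by
        intro j
        have h5 := Finset.prod_univ_sum
          (t := fun u : {u // u ∈ X} =>
            (Finset.univ : Finset (Fin (Fintype.card {v // v ∈ N u} + 1))))
          (f := fun u k => a u j k * (x' u : ℚ) ^ (k : ℕ))
        rw [Fintype.piFinset_univ] at h5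
        rw [← h5]
        exact Finset.prod_congr rfl fun u _ => ha u j (x' u)
      calc (∑ f, Cy f * Φ x' f)
          = ∑ f : Fin K → ∀ u : {u // u ∈ X}, Fin (Fintype.card {v // v ∈ N u} + 1),
              ∏ j, ∏ u, (a u j (f j u) * (x' u : ℚ) ^ ((f j u : ℕ))) := by
            refine Finset.sum_congr rfl fun f _ => ?_
            rw [hCy, hΦ]
            simp only [Finset.prod_mul_distrib]
        _ = ∏ j : Fin K, ∑ e : ∀ u : {u // u ∈ X}, Fin (Fintype.card {v // v ∈ N u} + 1),
              ∏ u, (a u j (e u) * (x' u : ℚ) ^ ((e u : ℕ))) := by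
            have h4 := Finset.prod_univ_sum
              (t := fun _ : Fin K =>
                (Finset.univ : Finset (∀ u : {u // u ∈ X},
                  Fin (Fintype.card {v // v ∈ N u} + 1))))
              (f := fun j e => ∏ u, (a u j (e u) * (x' u : ℚ) ^ ((e u : ℕ))))
            rw [Fintype.piFinset_univ] at h4
            exact h4.symm
        _ = _ := Finset.prod_congr rfl fun j _ => step1 j
    -- nonvanishing characterises goodness
    have hgood : ∀ x' ∈ S, ((∑ f, Cy f * Φ x' f) ≠ 0 ↔
        ∀ (u : {u // u ∈ X}) (v : {v // v ∈ Y}),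
          P.Adj ↑u ↑v → (x' u, y v) ∈ R ↑u ↑v) := by
      intro x' hx'
      rw [hsum x']
      have h1 : (∏ j : Fin K, ∏ u : {u // u ∈ X}, ∏ v : {v // v ∈ N u},
          ((x' u : ℚ) - (rt u v j : ℚ))) ≠ 0 ↔
          ∀ (j : Fin K) (u : {u // u ∈ X}) (v : {v // v ∈ N u}),
            (x' u : ℚ) ≠ (rt u v j : ℚ) := by
        simp [Finset.prod_ne_zero_iff, sub_ne_zero]
      rw [h1]
      constructor
      · intro h u v0 hadj
        have hv0 : (↑v0 : V) ∈ N u := Finset.mem_filter.mpr ⟨v0.2, hadj⟩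
        have hne : ∀ j : Fin K, x' u ≠ rt u ⟨↑v0, hv0⟩ j := by
          intro j he
          exact h j u ⟨↑v0, hv0⟩ (by exact_mod_cast congrArg (Nat.cast : ℕ → ℚ) he)
        have hRmem := (hroot u ⟨↑v0, hv0⟩ (x' u) (hS x' hx' u)).mp hne
        convert hRmem using 3
      · intro h j u v
        have hvy : (↑v : V) ∈ Y := (Finset.mem_filter.mp v.2).1
        have hadj : P.Adj ↑u ↑v := (Finset.mem_filter.mp v.2).2
        have hR := h u ⟨↑v, hvy⟩ hadj
        have := (hroot u v (x' u) (hS x' hx' u)).mpr hR j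
        exact fun he => this (Nat.cast_injective he)
    -- linear functional argument
    have hxne : (∑ f, Cy f * Φ x f) ≠ 0 := (hgood x hxS).mpr hxg
    by_contra hcon
    have hz : ∀ x' ∈ S', (∑ f, Cy f * Φ x' f) = 0 := by
      intro x' hx'
      by_contra hne
      exact hcon ⟨x', hx', (hgood x' (hsub hx')).mp hne⟩
    set ℓ : ((Fin K → ∀ u : {u // u ∈ X}, Fin (Fintype.card {v // v ∈ N u} + 1)) → ℚ)
        →ₗ[ℚ] ℚ :=
      { toFun := fun φ => ∑ f, Cy f * φ f
        map_add' := by intro φ ψ; simp [mul_add, Finset.sum_add_distrib]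
        map_smul' := by intro c φ; simp [Finset.mul_sum]; ring_nf; simp [mul_comm, mul_left_comm] } with hℓ
    have hker : Φ '' S' ⊆ (LinearMap.ker ℓ : Submodule ℚ _) := by
      rintro _ ⟨x', hx', rfl⟩
      exact LinearMap.mem_ker.mpr (hz x' hx')
    have hmem : Φ x ∈ LinearMap.ker ℓ :=
      Submodule.span_le.mpr hker (hspan x hxS)
    exact hxne (LinearMap.mem_ker.mp hmem)
end

section
/- Let I = (V,D,C) be an instance of the binary constraint satisfaction problem with primal graph P, and fix an ordering v_1,…,v_n of V. Let i ∈ {1,…,n} and let T'[i−1] ⊆ T[i−1] be an (X_{i−1}-Y_{i−1})-representative of T[i−1]. Define T'[i] to be the set of all tuples x ∈ 𝕏_i for which there exist x' ∈ T'[i−1] and a ∈ D_{v_i} such that: x agrees with x' on X_{i−1} ∩ X_i; for every constraint (v_j,v_i,S_c) ∈ C with v_j ∈ X_{i−1} it holds that (x'_{v_j},a) ∈ S_c; and if v_i ∈ X_i then x_{v_i} = a. Then T'[i] ⊆ T[i] and T'[i] is an (X_i-Y_i)-representative of T[i]. -/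
/-! Dynamic programming over a linear order of the variables of a binary CSP.
The variables are `Fin n`, ordered by their indices (so `v_1, …, v_i` are the vertices
with index `< i`).  A BCSP instance is modelled by its primal graph `P`, domains
`D v ⊆ ℕ`, and for every edge `uv` of `P` a constraint `R u v`, stored symmetrically. -/

/-- The first `i` variables `V_i`. -/
def VsetB (n i : ℕ) : Set (Fin n) := {u | (u : ℕ) < i}

/-- `X_i`: variables among the first `i` having a neighbor outside. -/
def XsetB {n : ℕ} (P : SimpleGraph (Fin n)) (i : ℕ) : Set (Fin n) :=
  {u | (u : ℕ) < i ∧ ∃ v : Fin n, i ≤ (v : ℕ) ∧ P.Adj u v}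

/-- `Y_i`: variables outside the first `i` having a neighbor inside. -/
def YsetB {n : ℕ} (P : SimpleGraph (Fin n)) (i : ℕ) : Set (Fin n) :=
  {v | i ≤ (v : ℕ) ∧ ∃ u : Fin n, (u : ℕ) < i ∧ P.Adj u v}

/-- An assignment is good on `A` if it satisfies all constraints inside `A`. -/
def GoodOnB {n : ℕ} (P : SimpleGraph (Fin n)) (R : Fin n → Fin n → Finset (ℕ × ℕ))
    (A : Set (Fin n)) (x : Fin n → ℕ) : Prop :=
  ∀ u ∈ A, ∀ v ∈ A, P.Adj u v → (x u, x v) ∈ R u v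

/-- `T[i]`: the set of tuples on `X_i` (represented by total assignments, only their
values on `X_i` being relevant) that extend to an assignment good on `V_i`. -/
def TsetB {n : ℕ} (P : SimpleGraph (Fin n)) (D : Fin n → Finset ℕ)
    (R : Fin n → Fin n → Finset (ℕ × ℕ)) (i : ℕ) : Set (Fin n → ℕ) :=
  {x | (∀ u ∈ XsetB P i, x u ∈ D u) ∧
    ∃ z : Fin n → ℕ, (∀ u ∈ XsetB P i, x u = z u) ∧
      (∀ u ∈ VsetB n i, z u ∈ D u) ∧ GoodOnB P R (VsetB n i) z}

/-- The pair `(x, y)` is good (at level `i`): all constraints between `X_i` and `Y_i`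
are satisfied. -/
def GoodPairB {n : ℕ} (P : SimpleGraph (Fin n)) (R : Fin n → Fin n → Finset (ℕ × ℕ))
    (i : ℕ) (x y : Fin n → ℕ) : Prop :=
  ∀ u ∈ XsetB P i, ∀ v ∈ YsetB P i, P.Adj u v → (x u, y v) ∈ R u v

/-- `S'` is an `(X_i-Y_i)`-representative of `S`: `S' ⊆ S` and for every domain-respecting
tuple `y` on `Y_i`, some `x ∈ S` forms a good pair with `y` iff some `x' ∈ S'` does. -/
def ReprB {n : ℕ} (P : SimpleGraph (Fin n)) (D : Fin n → Finset ℕ)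
    (R : Fin n → Fin n → Finset (ℕ × ℕ)) (i : ℕ) (S S' : Set (Fin n → ℕ)) : Prop :=
  S' ⊆ S ∧ ∀ y : Fin n → ℕ, (∀ v ∈ YsetB P i, y v ∈ D v) →
    ((∃ x ∈ S, GoodPairB P R i x y) ↔ ∃ x ∈ S', GoodPairB P R i x y)

/-- The dynamic-programming step: if `T' ⊆ T[i]` is an `(X_i-Y_i)`-representative of
`T[i]` and `v_{i+1}` is the next variable (the vertex `vi` with index `i`), then the set
`Tnext` of all tuples on `X_{i+1}` obtained from some `x' ∈ T'` and a value
`a ∈ D v_{i+1}` — agreeing with `x'` on `X_i ∩ X_{i+1}`, with `(x'_u, a)` allowed for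
every constraint between some `u ∈ X_i` and `v_{i+1}`, and taking value `a` at `v_{i+1}`
if `v_{i+1} ∈ X_{i+1}` — satisfies `Tnext ⊆ T[i+1]` and `Tnext` is an
`(X_{i+1}-Y_{i+1})`-representative of `T[i+1]`. -/
theorem bcsp_dp_step {n : ℕ} (P : SimpleGraph (Fin n)) (D : Fin n → Finset ℕ)
    (R : Fin n → Fin n → Finset (ℕ × ℕ))
    (hsym : ∀ u v a b, (a, b) ∈ R u v ↔ (b, a) ∈ R v u)
    (i : ℕ) (hi : i < n) (vi : Fin n) (hvi : (vi : ℕ) = i)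
    (T' : Set (Fin n → ℕ))
    (hrep : ReprB P D R i (TsetB P D R i) T') :
    ReprB P D R (i + 1) (TsetB P D R (i + 1))
      {x | (∀ u ∈ XsetB P (i + 1), x u ∈ D u) ∧
        ∃ x' ∈ T', ∃ a ∈ D vi,
          (∀ u ∈ XsetB P i ∩ XsetB P (i + 1), x u = x' u) ∧
          (∀ u ∈ XsetB P i, P.Adj u vi → (x' u, a) ∈ R u vi) ∧
          (vi ∈ XsetB P (i + 1) → x vi = a)} := by
  obtain ⟨hsub, hrep2⟩ := hrep
  have hXmono : ∀ u : Fin n, u ∈ XsetB P (i+1) → u ≠ vi →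
      u ∈ XsetB P i ∩ XsetB P (i+1) := by
    rintro u ⟨hu1, v, hv1, hadj⟩ hne
    have hui : (u:ℕ) < i := by
      have : (u:ℕ) ≠ i := fun hh => hne (Fin.ext (hh.trans hvi.symm))
      omega
    exact ⟨⟨hui, v, by omega, hadj⟩, hu1, v, hv1, hadj⟩
  have hsubset : {x | (∀ u ∈ XsetB P (i + 1), x u ∈ D u) ∧
        ∃ x' ∈ T', ∃ a ∈ D vi,
          (∀ u ∈ XsetB P i ∩ XsetB P (i + 1), x u = x' u) ∧
          (∀ u ∈ XsetB P i, P.Adj u vi → (x' u, a) ∈ R u vi) ∧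
          (vi ∈ XsetB P (i + 1) → x vi = a)} ⊆ TsetB P D R (i+1) := by
    rintro x ⟨hxD, x', hx'T', a, haD, hagree, hcons, hxvi⟩
    obtain ⟨hx'D, z', hz'x', hz'D, hz'good⟩ := hsub hx'T'
    refine ⟨hxD, fun u => if u = vi then a else z' u, ?_, ?_, ?_⟩
    · intro u hu
      by_cases h : u = vi
      · beta_reduce; rw [if_pos h, h]; exact hxvi (h ▸ hu)
      · beta_reduce; rw [if_neg h]
        obtain ⟨hui, _⟩ := hXmono u hu h
        rw [hagree u ⟨hui, hu⟩, hz'x' u hui]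
    · intro u hu
      by_cases h : u = vi
      · beta_reduce; rw [if_pos h, h]; exact haD
      · beta_reduce; rw [if_neg h]
        have hu1 : (u:ℕ) < i + 1 := hu
        have hui : (u:ℕ) < i := by
          have : (u:ℕ) ≠ i := fun hh => h (Fin.ext (hh.trans hvi.symm))
          omega
        exact hz'D u hui
    · intro u hu v hv hadj
      have hu1 : (u:ℕ) < i + 1 := hu
      have hv1 : (v:ℕ) < i + 1 := hv
      by_cases h : u = vi
      · by_cases h' : v = vi
        · rw [h, h'] at hadj; exact absurd hadj (P.loopless.irrefl vi)
        · have hvlt : (v:ℕ) < i := by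
            have : (v:ℕ) ≠ i := fun hh => h' (Fin.ext (hh.trans hvi.symm))
            omega
          have hadj' : P.Adj v vi := by rw [h] at hadj; exact hadj.symm
          have hvX : v ∈ XsetB P i := ⟨hvlt, vi, by omega, hadj'⟩
          beta_reduce; rw [if_pos h, if_neg h', h, ← hz'x' v hvX]
          exact (hsym v vi (x' v) a).mp (hcons v hvX hadj')
      · have hult : (u:ℕ) < i := by
          have : (u:ℕ) ≠ i := fun hh => h (Fin.ext (hh.trans hvi.symm))
          omega
        by_cases h' : v = vi
        · have hadj' : P.Adj u vi := by rw [h'] at hadj; exact hadj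
          have huX : u ∈ XsetB P i := ⟨hult, vi, by omega, hadj'⟩
          beta_reduce; rw [if_neg h, if_pos h', h', ← hz'x' u huX]
          exact hcons u huX hadj'
        · have hvlt : (v:ℕ) < i := by
            have : (v:ℕ) ≠ i := fun hh => h' (Fin.ext (hh.trans hvi.symm))
            omega
          beta_reduce; rw [if_neg h, if_neg h']
          exact hz'good u hult v hvlt hadj
  refine ⟨hsubset, fun y hy => ⟨?_, fun ⟨x, hx, hgp⟩ => ⟨x, hsubset hx, hgp⟩⟩⟩
  rintro ⟨x, ⟨hxD, z, hzx, hzD, hzgood⟩, hgp⟩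
  -- y₀ : the tuple on Y_i obtained from y by setting the value at vi to z vi
  set y₀ : Fin n → ℕ := fun v => if v = vi then z vi else y v with hy₀def
  have hy₀val : ∀ v, y₀ v = if v = vi then z vi else y v := fun _ => rfl
  have hviV : vi ∈ VsetB n (i+1) := by show (vi:ℕ) < i + 1; omega
  have hy₀ : ∀ v ∈ YsetB P i, y₀ v ∈ D v := by
    rintro v ⟨hv1, u, hu1, hadj⟩
    by_cases h : v = vi
    · rw [hy₀val v, if_pos h, h]; exact hzD vi hviV
    · rw [hy₀val v, if_neg h]
      have hv2 : i + 1 ≤ (v:ℕ) := by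
        have : (v:ℕ) ≠ i := fun hh => h (Fin.ext (hh.trans hvi.symm))
        omega
      exact hy v ⟨hv2, u, by omega, hadj⟩
  have hzT : z ∈ TsetB P D R i := by
    refine ⟨fun u hu => ?_, z, fun u _ => rfl, fun u hu => ?_, fun u hu v hv hadj => ?_⟩
    · obtain ⟨hu1, -⟩ := hu
      exact hzD u (by show (u:ℕ) < i + 1; omega)
    · have : (u:ℕ) < i := hu
      exact hzD u (by show (u:ℕ) < i + 1; omega)
    · have h1 : (u:ℕ) < i := hu
      have h2 : (v:ℕ) < i := hv
      exact hzgood u (by show (u:ℕ) < i + 1; omega) v (by show (v:ℕ) < i + 1; omega) hadj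
  have hgpz : GoodPairB P R i z y₀ := by
    rintro u ⟨hu1, -⟩ v ⟨hv1, -⟩ hadj
    by_cases h : v = vi
    · rw [hy₀val v, if_pos h, h]
      have hadj' : P.Adj u vi := h ▸ hadj
      exact hzgood u (by show (u:ℕ) < i + 1; omega) vi hviV hadj'
    · have hv2 : i + 1 ≤ (v:ℕ) := by
        have : (v:ℕ) ≠ i := fun hh => h (Fin.ext (hh.trans hvi.symm))
        omega
      have huX : u ∈ XsetB P (i+1) := ⟨by omega, v, hv2, hadj⟩
      have hvY : v ∈ YsetB P (i+1) := ⟨hv2, u, by omega, hadj⟩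
      rw [hy₀val v, if_neg h, ← hzx u huX]
      exact hgp u huX v hvY hadj
  obtain ⟨x', hx'T', hgpx'⟩ := (hrep2 y₀ hy₀).mp ⟨z, hzT, hgpz⟩
  obtain ⟨hx'D, -⟩ := hsub hx'T'
  refine ⟨fun u => if u = vi then z vi else x' u, ⟨?_, x', hx'T', z vi, hzD vi hviV,
    ?_, ?_, ?_⟩, ?_⟩
  · intro u hu
    by_cases h : u = vi
    · beta_reduce; rw [if_pos h, h]; exact hzD vi hviV
    · beta_reduce; rw [if_neg h]
      exact hx'D u (hXmono u hu h).1
  · rintro u ⟨⟨hu1, -⟩, -⟩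
    have h : u ≠ vi := fun hh => by rw [hh, hvi] at hu1; omega
    beta_reduce; rw [if_neg h]
  · intro u huX hadj
    have hviY : vi ∈ YsetB P i := ⟨by omega, u, huX.1, hadj⟩
    have h2 := hgpx' u huX vi hviY hadj
    rw [hy₀val vi, if_pos rfl] at h2
    exact h2
  · intro _; exact if_pos rfl
  · intro u hu v hv hadj
    by_cases h : u = vi
    · beta_reduce; rw [if_pos h, h, ← hzx vi (h ▸ hu)]
      exact hgp vi (h ▸ hu) v hv (h ▸ hadj)
    · beta_reduce; rw [if_neg h]
      obtain ⟨huXi, -⟩ := hXmono u hu h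
      obtain ⟨hv1, -⟩ := hv
      have hvY : v ∈ YsetB P i := ⟨by omega, u, huXi.1, hadj⟩
      have h' : v ≠ vi := fun hh => by rw [hh, hvi] at hv1; omega
      have h2 := hgpx' u huXi v hvY hadj
      rw [hy₀val v, if_neg h'] at h2
      exact h2
end

section
/- Let H be a connected, bipartite, undecomposable graph whose complement is not a circular-arc graph. Then mim(H) − 1 ≤ γ(H) ≤ i(H) − 1. -/
open SimpleGraph

/-- `i(H)`: maximum size of an incomparable set contained in one bipartition class. -/
noncomputable def iNum {W : Type} (H : SimpleGraph W) (X : Set W) : ℕ :=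
  sSup {n | ∃ S : Set W, (S ⊆ X ∨ S ⊆ Xᶜ) ∧ IncompSet H S ∧ S.ncard = n}

/-- `mim(H)`: maximum size of a strongly incomparable set contained in one
bipartition class. -/
noncomputable def mimNum {W : Type} (H : SimpleGraph W) (X : Set W) : ℕ :=
  sSup {n | ∃ S : Set W, (S ⊆ X ∨ S ⊆ Xᶜ) ∧ StrongIncompSet H S ∧ S.ncard = n}

/-- `γ(H)`: the maximum, over pairs of incomparable sets `S₁, S₂` lying in different
bipartition classes, such that every vertex of each set has a neighbor in the other set,
of `max_{x ∈ S₁} |{y ∈ S₂ : xy ∉ E(H)}|`. -/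
noncomputable def gammaNum {W : Type} (H : SimpleGraph W) (X : Set W) : ℕ :=
  sSup {m | ∃ S₁ S₂ : Set W,
    ((S₁ ⊆ X ∧ S₂ ⊆ Xᶜ) ∨ (S₁ ⊆ Xᶜ ∧ S₂ ⊆ X)) ∧
    IncompSet H S₁ ∧ IncompSet H S₂ ∧
    (∀ x ∈ S₁, ∃ y ∈ S₂, H.Adj x y) ∧ (∀ y ∈ S₂, ∃ x ∈ S₁, H.Adj x y) ∧
    ∃ x ∈ S₁, m = {y ∈ S₂ | ¬ H.Adj x y}.ncard}

/-- For a connected, bipartite, undecomposable graph `H` whose complement is not a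
circular-arc graph: `mim(H) − 1 ≤ γ(H) ≤ i(H) − 1`. -/
theorem mim_gamma_i {W : Type} [Fintype W] (H : SimpleGraph W) (X : Set W)
    (hconn : H.Connected) (hbip : BipClass H X) (hundec : Undecomposable H X)
    (hnca : ¬ IsCircularArcGraph Hᶜ) :
    mimNum H X - 1 ≤ gammaNum H X ∧ gammaNum H X ≤ iNum H X - 1 :=
    by
  classical
  have hcard : ∀ T : Set W, T.ncard ≤ Fintype.card W := fun T => by
    have := Set.ncard_le_ncard (Set.subset_univ T) Set.finite_univ
    simpa [Set.ncard_univ, Nat.card_eq_fintype_card] using this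
  have hbddI : BddAbove {n | ∃ S : Set W, (S ⊆ X ∨ S ⊆ Xᶜ) ∧ IncompSet H S ∧ S.ncard = n} := by
    refine ⟨Fintype.card W, fun n hn => ?_⟩
    obtain ⟨S, -, -, rfl⟩ := hn
    exact hcard S
  have hbddM : BddAbove {n | ∃ S : Set W, (S ⊆ X ∨ S ⊆ Xᶜ) ∧ StrongIncompSet H S ∧ S.ncard = n} := by
    refine ⟨Fintype.card W, fun n hn => ?_⟩
    obtain ⟨S, -, -, rfl⟩ := hn
    exact hcard S
  have hbddG : BddAbove {m | ∃ S₁ S₂ : Set W,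
      ((S₁ ⊆ X ∧ S₂ ⊆ Xᶜ) ∨ (S₁ ⊆ Xᶜ ∧ S₂ ⊆ X)) ∧
      IncompSet H S₁ ∧ IncompSet H S₂ ∧
      (∀ x ∈ S₁, ∃ y ∈ S₂, H.Adj x y) ∧ (∀ y ∈ S₂, ∃ x ∈ S₁, H.Adj x y) ∧
      ∃ x ∈ S₁, m = {y ∈ S₂ | ¬ H.Adj x y}.ncard} := by
    refine ⟨Fintype.card W, fun m hm => ?_⟩
    obtain ⟨S₁, S₂, -, -, -, -, -, x, -, rfl⟩ := hm
    exact hcard _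
  constructor
  · -- mim - 1 ≤ gamma
    rcases Nat.eq_zero_or_pos (mimNum H X) with h0 | hpos
    · simp [h0]
    · have hmem : mimNum H X ∈
          {n | ∃ S : Set W, (S ⊆ X ∨ S ⊆ Xᶜ) ∧ StrongIncompSet H S ∧ S.ncard = n} := by
        refine Nat.sSup_mem ⟨0, ?_⟩ hbddM
        exact ⟨∅, Or.inl (Set.empty_subset X), fun u hu => hu.elim, Set.ncard_empty W⟩
      obtain ⟨S, hside, hSI, hScard⟩ := hmem
      have hSne : S.Nonempty := Set.nonempty_of_ncard_ne_zero (by omega)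
      have hS' : ∀ u : W, ∃ u', u ∈ S → H.Adj u u' ∧ ∀ w ∈ S, w ≠ u → ¬ H.Adj w u' := by
        intro u
        by_cases hu : u ∈ S
        · obtain ⟨u', h1, h2⟩ := hSI u hu
          exact ⟨u', fun _ => ⟨h1, h2⟩⟩
        · exact ⟨u, fun h => absurd h hu⟩
      choose f hf using hS'
      have hadj : ∀ u ∈ S, H.Adj u (f u) := fun u hu => (hf u hu).1
      have hpriv : ∀ u ∈ S, ∀ w ∈ S, w ≠ u → ¬ H.Adj w (f u) := fun u hu => (hf u hu).2
      have hinj : Set.InjOn f S := by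
        intro u hu v hv he
        by_contra hne
        exact hpriv v hv u hu hne (he ▸ hadj u hu)
      obtain ⟨x, hx⟩ := hSne
      have hIS : IncompSet H S := by
        intro u hu v hv huv
        constructor
        · intro hsub
          exact hpriv u hu v hv (Ne.symm huv) (hsub (hadj u hu))
        · intro hsub
          exact hpriv v hv u hu huv (hsub (hadj v hv))
      have hIS₂ : IncompSet H (f '' S) := by
        rintro y₁ ⟨u, hu, rfl⟩ y₂ ⟨v, hv, rfl⟩ hne
        have huv : u ≠ v := fun h => hne (by rw [h])
        constructor
        · intro hsub
          have : H.Adj (f u) u := (hadj u hu).symm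
          exact hpriv v hv u hu huv ((hsub this).symm)
        · intro hsub
          have : H.Adj (f v) v := (hadj v hv).symm
          exact hpriv u hu v hv (Ne.symm huv) ((hsub this).symm)
      have hside' : (S ⊆ X ∧ f '' S ⊆ Xᶜ) ∨ (S ⊆ Xᶜ ∧ f '' S ⊆ X) := by
        rcases hside with h | h
        · refine Or.inl ⟨h, ?_⟩
          rintro y ⟨u, hu, rfl⟩
          exact (hbip (hadj u hu)).mp (h hu)
        · refine Or.inr ⟨h, ?_⟩
          rintro y ⟨u, hu, rfl⟩
          by_contra hy
          exact h hu ((hbip (hadj u hu)).mpr hy)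
      have hN1 : ∀ u ∈ S, ∃ y ∈ f '' S, H.Adj u y :=
        fun u hu => ⟨f u, ⟨u, hu, rfl⟩, hadj u hu⟩
      have hN2 : ∀ y ∈ f '' S, ∃ u ∈ S, H.Adj u y := by
        rintro y ⟨u, hu, rfl⟩
        exact ⟨u, hu, hadj u hu⟩
      have hkey : {y ∈ f '' S | ¬ H.Adj x y} = f '' (S \ {x}) := by
        ext y
        constructor
        · rintro ⟨⟨u, hu, rfl⟩, hny⟩
          refine ⟨u, ⟨hu, ?_⟩, rfl⟩
          rintro rfl
          exact hny (hadj u hu)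
        · rintro ⟨u, ⟨hu, hux⟩, rfl⟩
          exact ⟨⟨u, hu, rfl⟩, hpriv u hu x hx (fun h => hux (h ▸ rfl))⟩
      have hncard : {y ∈ f '' S | ¬ H.Adj x y}.ncard = mimNum H X - 1 := by
        rw [hkey, Set.ncard_image_of_injOn (hinj.mono Set.diff_subset),
          Set.ncard_diff_singleton_of_mem hx, hScard]
      refine le_csSup hbddG ⟨S, f '' S, hside', hIS, hIS₂, hN1, hN2, x, hx, hncard.symm⟩
  · -- gamma ≤ i - 1
    refine csSup_le' fun m hm => ?_
    obtain ⟨S₁, S₂, hside, hI1, hI2, hN1, hN2, x, hxS, rfl⟩ := hm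
    have h2 : S₂.ncard ≤ iNum H X := by
      refine le_csSup hbddI ⟨S₂, ?_, hI2, rfl⟩
      rcases hside with h | h
      · exact Or.inr h.2
      · exact Or.inl h.2
    obtain ⟨y₀, hy₀, hadjy⟩ := hN1 x hxS
    have hsub : {y ∈ S₂ | ¬ H.Adj x y} ⊆ S₂ \ {y₀} := by
      rintro y ⟨hyS, hny⟩
      refine ⟨hyS, ?_⟩
      rintro rfl
      exact hny hadjy
    calc {y ∈ S₂ | ¬ H.Adj x y}.ncard ≤ (S₂ \ {y₀}).ncard :=
          Set.ncard_le_ncard hsub (Set.toFinite _)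
      _ = S₂.ncard - 1 := Set.ncard_diff_singleton_of_mem hy₀
      _ ≤ iNum H X - 1 := Nat.sub_le_sub_right h2 1
end

section
/- Let r ≥ 2 and let H be the bipartite graph constructed as follows: start from the complete bipartite graph K_{r+1,r+1} with a perfect matching removed; let u_1, u_2 be non-adjacent vertices lying in different bipartition classes (i.e., a pair of the removed matching); add two new vertices v_1, v_2 and the edges u_1v_2, v_1v_2, and v_1u_2. Then γ(H) ≥ r, every induced matching in H has at most 3 edges (so mim(H) ≤ 3), and i(H) = r + 2. -/
open SimpleGraph

/-- The cross-adjacency between the left class `Fin (r+1) ⊕ Unit` and the right class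
`Fin (r+1) ⊕ Unit` of the graph of Statement 17: the two copies of `Fin (r+1)` form a
complete bipartite graph minus the perfect matching `{i,i}` (so `u₁ = inl 0` on the left
and `u₂ = inl 0` on the right are non-adjacent); the extra vertex `v₁ = inr ()` on the
left is adjacent exactly to `u₂` and to the extra vertex `v₂ = inr ()` on the right; and
`v₂` is adjacent exactly to `u₁` and `v₁`. -/
def crossAdj (r : ℕ) : (Fin (r + 1) ⊕ Unit) → (Fin (r + 1) ⊕ Unit) → Prop
  | Sum.inl i, Sum.inl j => i ≠ j
  | Sum.inl i, Sum.inr _ => i = 0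
  | Sum.inr _, Sum.inl j => j = 0
  | Sum.inr _, Sum.inr _ => True

/-- The bipartite graph of Statement 17. -/
def H17 (r : ℕ) : SimpleGraph ((Fin (r + 1) ⊕ Unit) ⊕ (Fin (r + 1) ⊕ Unit)) where
  Adj x y :=
    (∃ a b, x = Sum.inl a ∧ y = Sum.inr b ∧ crossAdj r a b) ∨
    (∃ a b, x = Sum.inr b ∧ y = Sum.inl a ∧ crossAdj r a b)
  symm := by
    constructor
    rintro x y (⟨a, b, rfl, rfl, h⟩ | ⟨a, b, rfl, rfl, h⟩)
    · exact Or.inr ⟨a, b, rfl, rfl, h⟩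
    · exact Or.inl ⟨a, b, rfl, rfl, h⟩
  loopless := by
    constructor
    rintro x (⟨a, b, h1, h2, _⟩ | ⟨a, b, h1, h2, _⟩) <;> subst h1 <;> simp at h2

section Aux

private abbrev Wr (r : ℕ) : Type := (Fin (r + 1) ⊕ Unit) ⊕ (Fin (r + 1) ⊕ Unit)

private abbrev vL (r : ℕ) (i : Fin (r+1)) : Wr r := Sum.inl (Sum.inl i)
private abbrev vR (r : ℕ) (j : Fin (r+1)) : Wr r := Sum.inr (Sum.inl j)
private abbrev w1 (r : ℕ) : Wr r := Sum.inl (Sum.inr ())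
private abbrev w2 (r : ℕ) : Wr r := Sum.inr (Sum.inr ())

variable {r : ℕ}

private lemma adj_lr {a b : Fin (r+1) ⊕ Unit} :
    (H17 r).Adj (Sum.inl a) (Sum.inr b) ↔ crossAdj r a b := by
  constructor
  · rintro (⟨a', b', h1, h2, h⟩ | ⟨a', b', h1, h2, h⟩)
    · cases h1; cases h2; exact h
    · simp at h1
  · intro h; exact Or.inl ⟨a, b, rfl, rfl, h⟩

private lemma adj_cases {x y : Wr r} (h : (H17 r).Adj x y) :
    (∃ a b, x = Sum.inl a ∧ y = Sum.inr b ∧ crossAdj r a b) ∨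
    (∃ a b, x = Sum.inr b ∧ y = Sum.inl a ∧ crossAdj r a b) := h

@[simp] private lemma adj_LL {i j : Fin (r+1)} :
    (H17 r).Adj (vL r i) (vR r j) ↔ i ≠ j := by
  rw [adj_lr]; rfl

@[simp] private lemma adj_LV {i : Fin (r+1)} :
    (H17 r).Adj (vL r i) (w2 r) ↔ i = 0 := by
  rw [adj_lr]; rfl

@[simp] private lemma adj_VL {j : Fin (r+1)} :
    (H17 r).Adj (w1 r) (vR r j) ↔ j = 0 := by
  rw [adj_lr]; rfl

@[simp] private lemma adj_VV : (H17 r).Adj (w1 r) (w2 r) := by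
  rw [adj_lr]; trivial

private lemma mkIncomp {W : Type} {H : SimpleGraph W} {u v y z : W}
    (hy : H.Adj u y) (hy' : ¬ H.Adj v y) (hz : H.Adj v z) (hz' : ¬ H.Adj u z) :
    IncompPair H u v :=
  ⟨fun hs => hy' (hs hy), fun hs => hz' (hs hz)⟩

private lemma incompPair_symm {W : Type} {H : SimpleGraph W} {u v : W}
    (h : IncompPair H u v) : IncompPair H v u := ⟨h.2, h.1⟩

private lemma triple_ncard_le {α : Type*} (a b c : α) : ({a, b, c} : Set α).ncard ≤ 3 := by
  have h1 : ({a, b, c} : Set α).ncard ≤ ({b, c} : Set α).ncard + 1 := Set.ncard_insert_le _ _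
  have h2 : ({b, c} : Set α).ncard ≤ ({c} : Set α).ncard + 1 := Set.ncard_insert_le _ _
  have h3 : ({c} : Set α).ncard = 1 := Set.ncard_singleton c
  omega

private lemma compl_zero_ncard (hr : 2 ≤ r) :
    ({(0 : Fin (r+1))}ᶜ : Set (Fin (r+1))).ncard = r := by
  have := Set.ncard_add_ncard_compl ({(0 : Fin (r+1))} : Set (Fin (r+1)))
  simp [Nat.card_eq_fintype_card] at this
  omega

private lemma range_inl_ncard :
    (Set.range (Sum.inl : (Fin (r+1) ⊕ Unit) → Wr r)).ncard = r + 2 := by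
  rw [← Set.image_univ, Set.ncard_image_of_injective _ Sum.inl_injective, Set.ncard_univ]
  simp [Nat.card_eq_fintype_card]

private lemma range_inr_ncard :
    (Set.range (Sum.inr : (Fin (r+1) ⊕ Unit) → Wr r)).ncard = r + 2 := by
  rw [← Set.image_univ, Set.ncard_image_of_injective _ Sum.inr_injective, Set.ncard_univ]
  simp [Nat.card_eq_fintype_card]

/-- The pair `(vL i, w1)` is incomparable. -/
private lemma incomp_L_w1 (hr : 2 ≤ r) (i : Fin (r+1)) :
    IncompPair (H17 r) (vL r i) (w1 r) := by
  obtain ⟨j0, hj00, hj0i⟩ : ∃ j0 : Fin (r+1), j0 ≠ 0 ∧ j0 ≠ i := by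
    by_cases h : i = ⟨1, by omega⟩
    · exact ⟨⟨2, by omega⟩, by simp [Fin.ext_iff], by subst h; simp [Fin.ext_iff]⟩
    · exact ⟨⟨1, by omega⟩, by simp [Fin.ext_iff], fun hh => h hh.symm⟩
  by_cases hi : i = 0
  · subst hi
    exact mkIncomp (y := vR r j0) (z := vR r 0)
      (adj_LL.2 fun h => hj0i h.symm) (by simp [hj00]) (by simp) (by simp)
  · exact mkIncomp (y := vR r j0) (z := w2 r)
      (adj_LL.2 fun h => hj0i h.symm) (by simp [hj00]) adj_VV (by simp [hi])

/-- The pair `(vL i, vL i')` for `i ≠ i'` is incomparable. -/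
private lemma incomp_L_L {i i' : Fin (r+1)} (h : i ≠ i') :
    IncompPair (H17 r) (vL r i) (vL r i') :=
  mkIncomp (y := vR r i') (z := vR r i)
    (adj_LL.2 h) (by simp) (adj_LL.2 h.symm) (by simp)

/-- The pair `(vR j, vR j')` for `j ≠ j'` is incomparable. -/
private lemma incomp_R_R {j j' : Fin (r+1)} (h : j ≠ j') :
    IncompPair (H17 r) (vR r j) (vR r j') :=
  mkIncomp (y := vL r j') (z := vL r j)
    ((adj_LL.2 h.symm).symm) (fun hh => (adj_LL.1 hh.symm) rfl)
    ((adj_LL.2 h).symm) (fun hh => (adj_LL.1 hh.symm) rfl)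

/-- The whole left class is an incomparable set. -/
private lemma incomp_left (hr : 2 ≤ r) :
    IncompSet (H17 r) (Set.range (Sum.inl : (Fin (r+1) ⊕ Unit) → Wr r)) := by
  rintro u ⟨a, rfl⟩ v ⟨b, rfl⟩ hne
  rcases a with i | u' <;> rcases b with i' | u''
  · exact incomp_L_L (by simpa using hne)
  · exact incomp_L_w1 hr i
  · exact incompPair_symm (incomp_L_w1 hr i')
  · exact absurd rfl hne

end Aux

/-- For `r ≥ 2` and the graph `H` of Statement 17 (built from `K_{r+1,r+1}` minus a
perfect matching by adding the path `u₁ v₂ v₁ u₂`): `γ(H) ≥ r`, every induced matching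
of `H` has at most `3` edges (so `mim(H) ≤ 3`), and `i(H) = r + 2` (with respect to the
bipartition class `X = range Sum.inl`). -/
theorem H17_invariants (r : ℕ) (hr : 2 ≤ r) :
    r ≤ gammaNum (H17 r) (Set.range Sum.inl) ∧
    (∀ M : (H17 r).Subgraph, M.IsMatching → M.IsInduced → M.edgeSet.ncard ≤ 3) ∧
    iNum (H17 r) (Set.range Sum.inl) = r + 2 := by
  obtain ⟨f1, f2, hf10, hf20, hf12⟩ :
      ∃ f1 f2 : Fin (r+1), f1 ≠ 0 ∧ f2 ≠ 0 ∧ f1 ≠ f2 :=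
    ⟨⟨1, by omega⟩, ⟨2, by omega⟩, by simp [Fin.ext_iff], by simp [Fin.ext_iff],
      by simp [Fin.ext_iff]⟩
  refine ⟨?_, ?_, ?_⟩
  · -- gammaNum ≥ r
    unfold gammaNum
    have hBdd : BddAbove {m | ∃ S₁ S₂ : Set (Wr r),
        ((S₁ ⊆ Set.range Sum.inl ∧ S₂ ⊆ (Set.range Sum.inl)ᶜ) ∨
          (S₁ ⊆ (Set.range Sum.inl)ᶜ ∧ S₂ ⊆ Set.range Sum.inl)) ∧
        IncompSet (H17 r) S₁ ∧ IncompSet (H17 r) S₂ ∧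
        (∀ x ∈ S₁, ∃ y ∈ S₂, (H17 r).Adj x y) ∧ (∀ y ∈ S₂, ∃ x ∈ S₁, (H17 r).Adj x y) ∧
        ∃ x ∈ S₁, m = {y ∈ S₂ | ¬ (H17 r).Adj x y}.ncard} := by
      refine ⟨Nat.card (Wr r), ?_⟩
      rintro m ⟨S₁, S₂, -, -, -, -, -, x, hx, rfl⟩
      calc {y ∈ S₂ | ¬ (H17 r).Adj x y}.ncard
          ≤ (Set.univ : Set (Wr r)).ncard :=
            Set.ncard_le_ncard (Set.subset_univ _) Set.finite_univ
        _ = Nat.card (Wr r) := Set.ncard_univ _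
    refine le_csSup hBdd ?_
    refine ⟨{w1 r, vL r f1, vL r f2}, Set.range (vR r), ?_, ?_, ?_, ?_, ?_, ?_⟩
    · left
      constructor
      · rintro x (rfl | rfl | rfl) <;> exact ⟨_, rfl⟩
      · rintro x ⟨j, rfl⟩
        simp
    · -- IncompSet S₁
      rintro u hu v hv huv
      simp only [Set.mem_insert_iff, Set.mem_singleton_iff] at hu hv
      have p1 : IncompPair (H17 r) (w1 r) (vL r f1) :=
        incompPair_symm (incomp_L_w1 hr f1)
      have p2 : IncompPair (H17 r) (w1 r) (vL r f2) :=
        incompPair_symm (incomp_L_w1 hr f2)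
      have p3 : IncompPair (H17 r) (vL r f1) (vL r f2) := incomp_L_L hf12
      rcases hu with rfl | rfl | rfl <;> rcases hv with rfl | rfl | rfl
      · exact absurd rfl huv
      · exact p1
      · exact p2
      · exact incompPair_symm p1
      · exact absurd rfl huv
      · exact p3
      · exact incompPair_symm p2
      · exact incompPair_symm p3
      · exact absurd rfl huv
    · -- IncompSet S₂
      rintro u ⟨j, rfl⟩ v ⟨j', rfl⟩ hne
      exact incomp_R_R (by simpa using hne)
    · -- every x ∈ S₁ has a neighbor in S₂
      rintro x (rfl | rfl | rfl)
      · exact ⟨vR r 0, ⟨0, rfl⟩, by simp⟩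
      · exact ⟨vR r 0, ⟨0, rfl⟩, adj_LL.2 hf10⟩
      · exact ⟨vR r 0, ⟨0, rfl⟩, adj_LL.2 hf20⟩
    · -- every y ∈ S₂ has a neighbor in S₁
      rintro y ⟨j, rfl⟩
      by_cases hj : j = f1
      · exact ⟨vL r f2, by simp, adj_LL.2 (by rw [hj]; exact hf12.symm)⟩
      · exact ⟨vL r f1, by simp, adj_LL.2 fun h => hj h.symm⟩
    · -- the witness x = w1 with r non-neighbors
      refine ⟨w1 r, by simp, ?_⟩
      have hset : {y ∈ Set.range (vR r) | ¬ (H17 r).Adj (w1 r) y}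
          = vR r '' ({(0 : Fin (r+1))}ᶜ) := by
        ext y
        constructor
        · rintro ⟨⟨j, rfl⟩, hadj⟩
          exact ⟨j, by simpa using fun h => hadj (adj_VL.2 h), rfl⟩
        · rintro ⟨j, hj, rfl⟩
          refine ⟨⟨j, rfl⟩, ?_⟩
          simpa using hj
      have hinj : Function.Injective (vR r) := by
        intro a b h
        simpa using h
      rw [hset, Set.ncard_image_of_injective _ hinj, compl_zero_ncard hr]
  · -- induced matchings have ≤ 3 edges
    intro M hM hInd
    have uniq : ∀ {x y y' : Wr r}, M.Adj x y → M.Adj x y' → y = y' :=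
      fun h h' => (hM (M.edge_vert h)).unique h h'
    have shape : ∀ e ∈ M.edgeSet, ∃ a b, e = s(Sum.inl a, Sum.inr b) ∧
        M.Adj (Sum.inl a) (Sum.inr b) := by
      intro e
      induction e using Sym2.ind with
      | _ x y =>
        intro he
        rw [SimpleGraph.Subgraph.mem_edgeSet] at he
        rcases adj_cases (M.adj_sub he) with ⟨a, b, rfl, rfl, h⟩ | ⟨a, b, rfl, rfl, h⟩
        · exact ⟨a, b, rfl, he⟩
        · exact ⟨a, b, Sym2.eq_swap, he.symm⟩
    have pair : ∀ {i j i' j' : Fin (r+1)}, M.Adj (vL r i) (vR r j) →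
        M.Adj (vL r i') (vR r j') → i ≠ i' → i = j' := by
      intro i j i' j' h h' hne
      by_contra hij
      have hadj : (H17 r).Adj (vL r i) (vR r j') := adj_LL.2 hij
      have hM2 : M.Adj (vL r i) (vR r j') :=
        hInd (M.edge_vert h) (M.edge_vert h'.symm) hadj
      have hjj : j = j' := by simpa using uniq h hM2
      subst hjj
      have : vL r i = vL r i' := uniq h.symm h'.symm
      exact hne (by simpa using this)
    have hsub3 : ∀ A B C : Sym2 (Wr r), M.edgeSet ⊆ {A, B, C} → M.edgeSet.ncard ≤ 3 := by
      intro A B C hsub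
      exact le_trans (Set.ncard_le_ncard hsub (Set.toFinite _)) (triple_ncard_le A B C)
    by_cases hC : ∃ i j : Fin (r+1), M.Adj (vL r i) (vR r j)
    · obtain ⟨i0, j0, hc⟩ := hC
      have hCall : ∀ {i j : Fin (r+1)}, M.Adj (vL r i) (vR r j) →
          (i = i0 ∧ j = j0) ∨ (i = j0 ∧ j = i0) := by
        intro i j h
        by_cases hi : i = i0
        · subst hi
          exact Or.inl ⟨rfl, by simpa using uniq h hc⟩
        · exact Or.inr ⟨pair h hc hi, (pair hc h (Ne.symm hi)).symm⟩
      by_cases h1 : M.Adj (w1 r) (vR r 0)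
      · by_cases h2 : M.Adj (vL r 0) (w2 r)
        · exfalso
          have hi0 : i0 = 0 := by
            by_contra hi0
            have hadj : (H17 r).Adj (vL r i0) (vR r 0) := adj_LL.2 hi0
            have hM2 : M.Adj (vL r i0) (vR r 0) :=
              hInd (M.edge_vert hc) (M.edge_vert h1.symm) hadj
            have : vL r i0 = w1 r := uniq hM2.symm h1.symm
            simp at this
          subst hi0
          have : vR r j0 = w2 r := uniq hc h2
          simp at this
        · refine hsub3 s(vL r i0, vR r j0) s(vL r j0, vR r i0) s(w1 r, vR r 0) ?_
          intro e he
          obtain ⟨a, b, rfl, hab⟩ := shape e he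
          rcases a with i | u
          · rcases b with j | u'
            · rcases hCall hab with ⟨rfl, rfl⟩ | ⟨rfl, rfl⟩
              · exact Or.inl rfl
              · exact Or.inr (Or.inl rfl)
            · exfalso
              have hi : i = 0 := by
                have := M.adj_sub hab
                rw [adj_lr] at this
                exact this
              subst hi
              exact h2 hab
          · rcases b with j | u'
            · have : vR r j = vR r 0 := uniq hab h1
              have hj : j = 0 := by simpa using this
              subst hj
              exact Or.inr (Or.inr rfl)
            · exfalso
              have : w2 r = vR r 0 := uniq hab h1
              simp at this
      · by_cases h2 : M.Adj (vL r 0) (w2 r)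
        · refine hsub3 s(vL r i0, vR r j0) s(vL r j0, vR r i0) s(vL r 0, w2 r) ?_
          intro e he
          obtain ⟨a, b, rfl, hab⟩ := shape e he
          rcases a with i | u
          · rcases b with j | u'
            · rcases hCall hab with ⟨rfl, rfl⟩ | ⟨rfl, rfl⟩
              · exact Or.inl rfl
              · exact Or.inr (Or.inl rfl)
            · have hi : i = 0 := by
                have := M.adj_sub hab
                rw [adj_lr] at this
                exact this
              subst hi
              exact Or.inr (Or.inr rfl)
          · rcases b with j | u'
            · exfalso
              have hj : j = 0 := by
                have := M.adj_sub hab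
                rw [adj_lr] at this
                exact this
              subst hj
              exact h1 hab
            · exfalso
              have : vL r 0 = w1 r := uniq h2.symm hab.symm
              simp at this
        · refine hsub3 s(vL r i0, vR r j0) s(vL r j0, vR r i0) s(w1 r, w2 r) ?_
          intro e he
          obtain ⟨a, b, rfl, hab⟩ := shape e he
          rcases a with i | u
          · rcases b with j | u'
            · rcases hCall hab with ⟨rfl, rfl⟩ | ⟨rfl, rfl⟩
              · exact Or.inl rfl
              · exact Or.inr (Or.inl rfl)
            · exfalso
              have hi : i = 0 := by
                have := M.adj_sub hab
                rw [adj_lr] at this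
                exact this
              subst hi
              exact h2 hab
          · rcases b with j | u'
            · exfalso
              have hj : j = 0 := by
                have := M.adj_sub hab
                rw [adj_lr] at this
                exact this
              subst hj
              exact h1 hab
            · exact Or.inr (Or.inr rfl)
    · refine hsub3 s(w1 r, vR r 0) s(vL r 0, w2 r) s(w1 r, w2 r) ?_
      intro e he
      obtain ⟨a, b, rfl, hab⟩ := shape e he
      rcases a with i | u
      · rcases b with j | u'
        · exact absurd ⟨i, j, hab⟩ hC
        · have hi : i = 0 := by
            have := M.adj_sub hab
            rw [adj_lr] at this
            exact this
          subst hi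
          exact Or.inr (Or.inl rfl)
      · rcases b with j | u'
        · have hj : j = 0 := by
            have := M.adj_sub hab
            rw [adj_lr] at this
            exact this
          subst hj
          exact Or.inl rfl
        · exact Or.inr (Or.inr rfl)
  · -- iNum = r + 2
    unfold iNum
    have hub : ∀ n ∈ {n | ∃ S : Set (Wr r),
        (S ⊆ Set.range Sum.inl ∨ S ⊆ (Set.range Sum.inl)ᶜ) ∧
        IncompSet (H17 r) S ∧ S.ncard = n}, n ≤ r + 2 := by
      rintro n ⟨S, hS | hS, -, rfl⟩
      · exact le_trans (Set.ncard_le_ncard hS (Set.toFinite _)) (le_of_eq range_inl_ncard)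
      · rw [Set.compl_range_inl] at hS
        exact le_trans (Set.ncard_le_ncard hS (Set.toFinite _)) (le_of_eq range_inr_ncard)
    have hmem : r + 2 ∈ {n | ∃ S : Set (Wr r),
        (S ⊆ Set.range Sum.inl ∨ S ⊆ (Set.range Sum.inl)ᶜ) ∧
        IncompSet (H17 r) S ∧ S.ncard = n} :=
      ⟨Set.range Sum.inl, Or.inl subset_rfl, incomp_left hr, range_inl_ncard⟩
    exact le_antisymm (csSup_le ⟨r + 2, hmem⟩ hub) (le_csSup ⟨r + 2, hub⟩ hmem)
end
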